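/- arXiv:1903.10701 — 6 statements merged into one kernel-verified Lean document; each statement's English description precedes it below -/
import Mathlib

section
/- For every integer n ≥ 5, the words defined by the recurrences satisfy the length identities |V_n| = n·(n−2)! − 3 and |SEQ_n| = n! − 1. -/
/-- `σ`: cyclic left shift by one position. -/
def sig (l : List ℕ) : List ℕ := l.rotate 1

/-- `τ`: transposition of the first two entries. -/
def tau : List ℕ → List ℕ
  | a :: b :: rest => b :: a :: rest
  | l => l

/-- Apply a word over the alphabet {σ,τ} (encoded: `false` = σ, `true` = τ)
letter by letter, from left to right. -/
def applyWord (w : List Bool) (l : List ℕ) : List ℕ :=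
  w.foldl (fun p c => if c then tau p else sig p) l

/-- `l` is an n-permutation: a sequence containing each of 1,…,n exactly once. -/
def IsPerm (n : ℕ) (l : List ℕ) : Prop := l.Perm (List.range' 1 n)

/-- The permutation (n, n−1, …, 1). -/
def descList (n : ℕ) : List ℕ := (List.range n).reverse.map (· + 1)

/-- Cyclic successor ⊕1 on {1,…,n−1}. -/
def osucc (n a : ℕ) : ℕ := if a = n - 1 then 1 else a + 1

/-- Cyclic predecessor ⊖1 on {1,…,n−1}. -/
def opred (n a : ℕ) : ℕ := if a = 1 then n - 1 else a - 1

/-- From a seed (a₁, a₂, …, a_{n−1}) form (a₁, a₂⊕1, a₂, …, a_{n−1}). -/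
def seedToPerm (n : ℕ) : List ℕ → List ℕ
  | a1 :: a2 :: rest => a1 :: osucc n a2 :: a2 :: rest
  | l => l

/-- ψ is a seed: an (n−1)-tuple of distinct elements of {1,…,n} with first entry n
such that (a₁, a₂⊕1, a₂, …, a_{n−1}) is an n-permutation. -/
def IsSeed (n : ℕ) (ψ : List ℕ) : Prop :=
  ψ.length = n - 1 ∧ ψ.head? = some n ∧ IsPerm n (seedToPerm n ψ)

/-- The missing element mis(ψ) = a₂⊕1. -/
def mis (n : ℕ) (ψ : List ℕ) : ℕ := osucc n (ψ.getD 1 0)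

/-- The package perms(ψ): all permutations obtained by inserting mis(ψ)
at any position of ψ and then taking any cyclic shift. -/
def perms (n : ℕ) (ψ : List ℕ) : Set (List ℕ) :=
  { π | ∃ i j, i ≤ ψ.length ∧ π = (ψ.insertIdx i (mis n ψ)).rotate j }

/-- cycle(π): the set of cyclic shifts of π. -/
def cycle (π : List ℕ) : Set (List ℕ) := { ρ | ∃ j, ρ = π.rotate j }

/-- ψ̃ = (a₁, mis(ψ), a₂, …, a_{n−1}). -/
def tildeSeed (n : ℕ) (ψ : List ℕ) : List ℕ :=
  match ψ with
  | a1 :: rest => a1 :: mis n ψ :: rest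
  | [] => []

/-- ψ^(i) (for 1 ≤ i ≤ n−1): the right cyclic shift of ψ by i−1 positions
with mis(ψ) prepended; for i = n−1 this is (x, a₂, …, a_{n−1}, a₁). -/
def seedShift (n : ℕ) (ψ : List ℕ) (i : ℕ) : List ℕ := mis n ψ :: ψ.rotate (n - i)

/-- Length of the maximal initial run a = b⊕1 in a list. -/
def decRun (n : ℕ) : List ℕ → ℕ
  | a :: b :: rest => if a = osucc n b then decRun n (b :: rest) + 1 else 1
  | [_] => 1
  | [] => 0

/-- height(ψ): the largest k with aᵢ = a_{i+1}⊕1 for all 2 ≤ i ≤ k. -/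
def height (n : ℕ) (ψ : List ℕ) : ℕ := decRun n ψ.tail

/-- The hub seed (n, b, b⊖1, …, b⊖(n−3)). -/
def hubSeed (n b : ℕ) : List ℕ := n :: (List.range (n - 2)).map (fun j => (opred n)^[j] b)

/-- Hubₙ: the set of hub seeds. -/
def Hub (n : ℕ) : Set (List ℕ) := { ψ | ∃ b, 1 ≤ b ∧ b ≤ n - 1 ∧ ψ = hubSeed n b }

/-- `IsParent n ψ β` means ψ = parent(β): ψ, β are neighboring distinct seeds,
height(ψ) > 1 and mis(ψ) = mis(β)⊕1. -/
def IsParent (n : ℕ) (par child : List ℕ) : Prop :=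
  IsSeed n par ∧ IsSeed n child ∧ par ≠ child ∧
  (perms n par ∩ perms n child).Nonempty ∧
  1 < height n par ∧ mis n par = osucc n (mis n child)

/-- `IsSon n β ψ i` means β = son(ψ, i), i.e. β is a seed with σ^i(ψ^(i)) = β̃. -/
def IsSon (n : ℕ) (child par : List ℕ) (i : ℕ) : Prop :=
  IsSeed n child ∧ sig^[i] (seedShift n par i) = tildeSeed n child

/-- γ_k = σ^k τ. -/
def gam (k : ℕ) : List Bool := List.replicate k false ++ [true]

/-- W_0 = σ and W_k = τ · ∏_{i=1}^{n−2} σ^i W_{Δ(k,i)} γ_{n−2−i},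
where Δ(k,i) = min(k−1, n−2−i). -/
def W (n : ℕ) : ℕ → List Bool
  | 0 => [false]
  | k + 1 => true :: ((List.range (n - 2)).map (fun j =>
      List.replicate (j + 1) false ++ W n (min k (n - 2 - (j + 1))) ++
        gam (n - 2 - (j + 1)))).flatten
  termination_by k => k
  decreasing_by omega

/-- V_n = γ_{n−3} · ∏_{i=2}^{n−3} σ^i W_{Δ(n−3,i)} γ_{n−2−i} · σ^{n−1}. -/
def V (n : ℕ) : List Bool :=
  gam (n - 3) ++
  ((List.range (n - 4)).map (fun j =>
    List.replicate (j + 2) false ++ W n (min (n - 4) (n - 2 - (j + 2))) ++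
      gam (n - 2 - (j + 2)))).flatten ++
  List.replicate (n - 1) false

/-- SEQ_n = γ₁^{n−2} σ² (V_n τ)^{n−2} V_n. -/
def SEQ (n : ℕ) : List Bool :=
  (List.replicate (n - 2) (gam 1)).flatten ++ List.replicate 2 false ++
  (List.replicate (n - 2) (V n ++ [true])).flatten ++ V n

/-- r: the first element after the value n in the left-to-right cyclic reading
of π with the entry p₂ skipped. -/
def rVal (n : ℕ) (π : List ℕ) : ℕ :=
  match π with
  | p1 :: _ :: rest =>
      let l := p1 :: rest
      l.getD ((l.idxOf n + 1) % l.length) 0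
  | _ => 0

/-- The Sawada–Williams successor function `next`. -/
def swNext (n : ℕ) (π : List ℕ) : List ℕ :=
  if π = descList n then sig π
  else if π.getD 1 0 ≠ n ∧ π.getD 1 0 = osucc n (rVal n π) then tau π else sig π

/-- GEN(π, α): all permutations visited (including π) when α is applied to π. -/
def GEN (α : List Bool) (π : List ℕ) : Set (List ℕ) :=
  { ρ | ∃ t, t ≤ α.length ∧ ρ = applyWord (α.take t) π }

/-- Tree(ψ): ψ together with all seeds from which ψ is reachable by parent links. -/
def SeedTree (n : ℕ) (ψ : List ℕ) : Set (List ℕ) :=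
  { β | Relation.ReflTransGen (fun x y => IsParent n y x) β ψ }

/-- bunch(ψ) = (⋃_{β ∈ Tree(ψ)} perms(β) ∖ cycle(ψ̃)) ∪ {ψ̃, ψ^(n−1)}. -/
def bunch (n : ℕ) (ψ : List ℕ) : Set (List ℕ) :=
  ((⋃ β ∈ SeedTree n ψ, perms n β) \ cycle (tildeSeed n ψ)) ∪
    {tildeSeed n ψ, seedShift n ψ (n - 1)}

/-- rank(π): the number of initial letters of SEQ_n needed to reach π from
π₀ = τ((n, n−1, …, 1)). -/
noncomputable def rank (n : ℕ) (π : List ℕ) : ℕ :=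
  sInf { t | applyWord ((SEQ n).take t) (tau (descList n)) = π }

/-- SUM(k,j) = |τ · ∏_{i=1}^{j−1} σ^i W_{Δ(k,i)} γ_{n−2−i}| + j. -/
def SUMw (n k j : ℕ) : ℕ :=
  (true :: ((List.range (j - 1)).map (fun m =>
    List.replicate (m + 1) false ++ W n (min (k - 1) (n - 2 - (m + 1))) ++
      gam (n - 2 - (m + 1)))).flatten).length + j

/-- ord(ψ): the position of the entry mis(ψ)⊕1 in ψ, counted from the right end. -/
def ord (n : ℕ) (ψ : List ℕ) : ℕ := ψ.length - ψ.idxOf (osucc n (mis n ψ))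

/-- Length of the continuation of the maximal decreasing subsequence starting
with current value `cur`. -/
def chainLen (n : ℕ) : List ℕ → ℕ → ℕ
  | [], _ => 0
  | b :: rest, cur => if cur = osucc n b then chainLen n rest b + 1 else chainLen n rest cur

/-- level(ψ) = n − m − 3, where m+1 is the length of dec_seq(ψ). -/
def level (n : ℕ) (ψ : List ℕ) : ℕ := n - chainLen n (ψ.drop 2) (ψ.getD 1 0) - 3



private def Ssum (n k : ℕ) : ℕ := ∑ i ∈ Finset.range k, (n - 3).descFactorial i

private lemma gam_length (k : ℕ) : (gam k).length = k + 1 := by simp [gam]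

private lemma flat_len (g : ℕ → List Bool) (N : ℕ) :
    ((List.range N).map g).flatten.length = ∑ j ∈ Finset.range N, (g j).length := by
  rw [List.length_flatten, List.map_map]
  rfl

private lemma keyId (n : ℕ) (hn : 5 ≤ n) : ∀ k, k ≤ n - 3 →
    1 + (∑ v ∈ Finset.range k, Ssum n v) + (n - 2 - k) * Ssum n k = Ssum n (k + 1) := by
  intro k
  induction k with
  | zero => intro _; simp [Ssum]
  | succ k ih =>
    intro hk
    have ih' := ih (by omega)
    have hd : (n - 3).descFactorial (k + 1) = (n - 3 - k) * (n - 3).descFactorial k :=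
      Nat.descFactorial_succ _ _
    have hS1 : Ssum n (k + 1) = Ssum n k + (n - 3).descFactorial k :=
      Finset.sum_range_succ _ _
    have hS2 : Ssum n (k + 2) = Ssum n (k + 1) + (n - 3).descFactorial (k + 1) :=
      Finset.sum_range_succ _ _
    have hV : ∑ v ∈ Finset.range (k + 1), Ssum n v
        = (∑ v ∈ Finset.range k, Ssum n v) + Ssum n k := Finset.sum_range_succ _ _
    have hc1 : n - 2 - k = n - 3 - k + 1 := by omega
    have hc2 : n - 2 - (k + 1) = n - 3 - k := by omega
    rw [hS1, hc1] at ih'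
    rw [hV, hc2, hS2, hS1, hd]
    set A := ∑ v ∈ Finset.range k, Ssum n v
    set a := Ssum n k
    set D := (n - 3).descFactorial k
    set c := n - 3 - k
    have e1 : (c + 1) * a = c * a + a := by ring
    have e2 : c * (a + D) = c * a + c * D := by ring
    rw [e2]
    rw [e1] at ih'
    generalize c * a = p at ih' ⊢
    generalize c * D = q
    omega

private lemma W_length (n : ℕ) (hn : 5 ≤ n) :
    ∀ k, k ≤ n - 4 → (W n k).length = 1 + n * (n - 2) * Ssum n k := by
  intro k
  induction k using Nat.strong_induction_on with
  | _ k ih =>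
    match k with
    | 0 => intro _; simp [W, Ssum]
    | k + 1 =>
      intro hk
      have hterm : ∀ j ∈ Finset.range (n - 2),
          (List.replicate (j + 1) false ++ W n (min k (n - 2 - (j + 1))) ++
            gam (n - 2 - (j + 1))).length
          = n + n * (n - 2) * Ssum n (min k (n - 2 - (j + 1))) := by
        intro j hj
        rw [Finset.mem_range] at hj
        have hW := ih (min k (n - 2 - (j + 1))) (by omega) (by omega)
        simp only [List.length_append, List.length_replicate, hW, gam_length]
        omega
      rw [W, List.length_cons,
        flat_len (fun j => List.replicate (j + 1) false ++ W n (min k (n - 2 - (j + 1))) ++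
          gam (n - 2 - (j + 1))) (n - 2),
        Finset.sum_congr rfl hterm, Finset.sum_add_distrib, Finset.sum_const,
        Finset.card_range, ← Finset.mul_sum]
      have hre : ∀ j ∈ Finset.range (n - 2),
          Ssum n (min k (n - 2 - (j + 1)))
            = (fun v => Ssum n (min k v)) (n - 2 - 1 - j) := by
        intro j hj
        rw [Finset.mem_range] at hj
        congr 2
        omega
      rw [Finset.sum_congr rfl hre, Finset.sum_range_reflect (fun v => Ssum n (min k v)) (n - 2)]
      have hsplit : ∑ v ∈ Finset.range (n - 2), Ssum n (min k v)
          = (∑ v ∈ Finset.range k, Ssum n v) + (n - 2 - k) * Ssum n k := by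
        rw [Finset.range_eq_Ico,
          ← Finset.sum_Ico_consecutive (fun v => Ssum n (min k v)) (Nat.zero_le k) (by omega : k ≤ n - 2)]
        congr 1
        · rw [← Finset.range_eq_Ico]
          apply Finset.sum_congr rfl
          intro v hv
          rw [Finset.mem_range] at hv
          rw [min_eq_right (by omega : v ≤ k)]
        · have h2 : ∀ v ∈ Finset.Ico k (n - 2), Ssum n (min k v) = Ssum n k := by
            intro v hv
            rw [Finset.mem_Ico] at hv
            rw [min_eq_left (by omega : k ≤ v)]
          rw [Finset.sum_congr rfl h2, Finset.sum_const, Nat.card_Ico, smul_eq_mul]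
      rw [hsplit]
      have hkey := keyId n hn k (by omega)
      rw [← hkey]
      ring

private lemma V_length_add (n : ℕ) (hn : 5 ≤ n) :
    (V n).length + 3 = n * Nat.factorial (n - 2) := by
  have hterm : ∀ j ∈ Finset.range (n - 4),
      (List.replicate (j + 2) false ++ W n (min (n - 4) (n - 2 - (j + 2))) ++
        gam (n - 2 - (j + 2))).length
      = n + n * (n - 2) * Ssum n (min (n - 4) (n - 2 - (j + 2))) := by
    intro j hj
    rw [Finset.mem_range] at hj
    have hW := W_length n hn (min (n - 4) (n - 2 - (j + 2))) (by omega)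
    simp only [List.length_append, List.length_replicate, hW, gam_length]
    omega
  have hV : (V n).length = (n - 2) + (∑ j ∈ Finset.range (n - 4),
      (n + n * (n - 2) * Ssum n (min (n - 4) (n - 2 - (j + 2))))) + (n - 1) := by
    rw [V]
    simp only [List.length_append, gam_length, List.length_replicate]
    rw [flat_len (fun j => List.replicate (j + 2) false ++
        W n (min (n - 4) (n - 2 - (j + 2))) ++ gam (n - 2 - (j + 2))) (n - 4),
      Finset.sum_congr rfl hterm]
    omega
  have hre : ∀ j ∈ Finset.range (n - 4),
      Ssum n (min (n - 4) (n - 2 - (j + 2)))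
        = (fun v => Ssum n (v + 1)) (n - 4 - 1 - j) := by
    intro j hj
    rw [Finset.mem_range] at hj
    congr 1
    omega
  have hSS : ∑ j ∈ Finset.range (n - 4), Ssum n (min (n - 4) (n - 2 - (j + 2)))
      = ∑ v ∈ Finset.range (n - 3), Ssum n v := by
    rw [Finset.sum_congr rfl hre, Finset.sum_range_reflect (fun v => Ssum n (v + 1)) (n - 4),
      show n - 3 = (n - 4) + 1 from by omega,
      Finset.sum_range_succ' (fun v => Ssum n v) (n - 4)]
    simp [Ssum]
  rw [Finset.sum_add_distrib, Finset.sum_const, Finset.card_range, smul_eq_mul,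
    ← Finset.mul_sum, hSS] at hV
  have hkey := keyId n hn (n - 3) (le_refl _)
  have hS2 : Ssum n (n - 3 + 1) = Ssum n (n - 3) + (n - 3).descFactorial (n - 3) :=
    Finset.sum_range_succ _ _
  rw [hS2, Nat.descFactorial_self] at hkey
  have hc : n - 2 - (n - 3) = 1 := by omega
  rw [hc, one_mul] at hkey
  have hB : (∑ v ∈ Finset.range (n - 3), Ssum n v) + 1 = (n - 3).factorial := by omega
  obtain ⟨m, rfl⟩ : ∃ m, n = m + 5 := ⟨n - 5, by omega⟩
  have e2 : m + 5 - 2 = m + 3 := by omega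
  have e3 : m + 5 - 3 = m + 2 := by omega
  have e4 : m + 5 - 4 = m + 1 := by omega
  have e1 : m + 5 - 1 = m + 4 := by omega
  rw [e2, e1, e4, e3] at hV
  rw [e3] at hB
  rw [hV, e2,
    show Nat.factorial (m + 3) = (m + 3) * Nat.factorial (m + 2) from Nat.factorial_succ _,
    ← hB]
  set B := ∑ v ∈ Finset.range (m + 2), Ssum (m + 5) v
  ring

/-- |V_n| = n·(n−2)! − 3 and |SEQ_n| = n! − 1. -/
theorem length_V_and_SEQ (n : ℕ) (hn : 5 ≤ n) :
    (V n).length = n * Nat.factorial (n - 2) - 3 ∧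
    (SEQ n).length = Nat.factorial n - 1 := by
  have hv := V_length_add n hn
  constructor
  · omega
  · have hseq : (SEQ n).length = (n - 2) * 2 + 2 + (n - 2) * ((V n).length + 1) + (V n).length := by
      rw [SEQ]
      simp [List.length_flatten, List.map_replicate, List.sum_replicate, gam_length,
        smul_eq_mul, Nat.add_comm]
      ring
    have hfac : Nat.factorial n = n * (n - 1) * Nat.factorial (n - 2) := by
      obtain ⟨m, rfl⟩ : ∃ m, n = m + 5 := ⟨n - 5, by omega⟩
      rw [show m + 5 - 1 = m + 4 from by omega, show m + 5 - 2 = m + 3 from by omega,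
        Nat.factorial_succ (m + 4), Nat.factorial_succ (m + 3)]
      ring
    have key : (SEQ n).length + 1 = Nat.factorial n := by
      rw [hseq, hfac]
      set v := (V n).length
      obtain ⟨m, rfl⟩ : ∃ m, n = m + 5 := ⟨n - 5, by omega⟩
      rw [show m + 5 - 2 = m + 3 from by omega] at *
      rw [show m + 5 - 1 = m + 4 from by omega]
      rw [show (m + 5) * (m + 4) * Nat.factorial (m + 3)
          = (m + 4) * ((m + 5) * Nat.factorial (m + 3)) from by ring, ← hv]
      ring
    have : 1 ≤ Nat.factorial n := Nat.one_le_iff_ne_zero.mpr (Nat.factorial_ne_zero n)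
    omega
end

section
/- For every integer n ≥ 4 and every n-permutation π, the number of seeds ψ such that π ∈ perms(ψ) is either 1 or 2. -/
section AuxPackage

lemma aux_insertIdx_perm (x : ℕ) : ∀ (i : ℕ) (l : List ℕ), i ≤ l.length →
    (l.insertIdx i x).Perm (x :: l)
  | 0, l, _ => by simp [List.insertIdx_zero]
  | i+1, a :: t, h => by
    rw [List.insertIdx_succ_cons]
    exact ((aux_insertIdx_perm x i t (by simpa using h)).cons a).trans (List.Perm.swap x a t)

lemma aux_erase_insertIdx (x : ℕ) : ∀ (i : ℕ) (l : List ℕ), x ∉ l →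
    (l.insertIdx i x).erase x = l
  | 0, l, _ => by rw [List.insertIdx_zero, List.erase_cons_head]
  | _+1, [], _ => by rw [List.insertIdx_of_length_lt (by simp)]; rfl
  | i+1, a :: t, h => by
    have hax : ¬((a == x) = true) := by
      simp only [beq_iff_eq]
      intro e; exact h (e ▸ List.mem_cons_self)
    rw [List.insertIdx_succ_cons, List.erase_cons_tail hax,
      aux_erase_insertIdx x i t (fun ht => h (List.mem_cons_of_mem a ht))]

lemma aux_insertIdx_erase (x : ℕ) : ∀ (l : List ℕ), x ∈ l →
    (l.erase x).insertIdx (l.idxOf x) x = l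
  | a :: t, h => by
    by_cases hax : a = x
    · subst hax
      rw [List.erase_cons_head, List.idxOf_cons_self, List.insertIdx_zero]
    · have hxt : x ∈ t := by
        rcases List.mem_cons.mp h with h1 | h1
        · exact absurd h1.symm hax
        · exact h1
      rw [List.erase_cons_tail (by simpa using hax), List.idxOf_cons_ne _ hax,
        show Nat.succ (t.idxOf x) = t.idxOf x + 1 from rfl, List.insertIdx_succ_cons,
        aux_insertIdx_erase x t hxt]

lemma aux_rot_norm (n : ℕ) (l : List ℕ) (hl : l.Nodup) (hn : n ∈ l) (k : ℕ) :
    (l.rotate k).rotate ((l.rotate k).idxOf n) = l.rotate (l.idxOf n) := by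
  have hlen : 0 < l.length := List.length_pos_iff.mpr (List.ne_nil_of_mem hn)
  have hnm : n ∈ l.rotate k := (List.mem_rotate).mpr hn
  have h1 : (l.rotate k).idxOf n < (l.rotate k).length := List.idxOf_lt_length_iff.mpr hnm
  have h2 : l.idxOf n < l.length := List.idxOf_lt_length_iff.mpr hn
  rw [List.rotate_rotate, Nat.add_comm,
    ← List.rotate_mod l ((l.rotate k).idxOf n + k), ← List.rotate_mod l (l.idxOf n)]
  congr 1
  have e1 : l[((l.rotate k).idxOf n + k) % l.length]'(Nat.mod_lt _ hlen) = n := by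
    have h := List.getElem_rotate l k ((l.rotate k).idxOf n) h1
    rw [List.getElem_idxOf h1] at h
    exact h.symm
  have e2 : l[l.idxOf n % l.length]'(Nat.mod_lt _ hlen) = n := by
    have hmod : l.idxOf n % l.length = l.idxOf n := Nat.mod_eq_of_lt h2
    simp only [hmod]
    exact List.getElem_idxOf h2
  exact hl.getElem_inj_iff.mp (e1.trans e2.symm)

end AuxPackage

/-- every n-permutation belongs to exactly one or two packages. -/
theorem package_count_one_or_two (n : ℕ) (hn : 4 ≤ n) (π : List ℕ) (hπ : IsPerm n π) :
    {ψ : List ℕ | IsSeed n ψ ∧ π ∈ perms n ψ}.ncard = 1 ∨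
    {ψ : List ℕ | IsSeed n ψ ∧ π ∈ perms n ψ}.ncard = 2 := by
  classical
  have hπR : π.Perm (List.range' 1 n) := hπ
  have hlenπ : π.length = n := by simpa using hπR.length_eq
  have hnπ : n ∈ π := hπR.mem_iff.mpr (by simp [List.mem_range'_1]; omega)
  have hidx : π.idxOf n < π.length := List.idxOf_lt_length_iff.mpr hnπ
  set ν := π.rotate (π.idxOf n) with hνdef
  have hνperm : ν.Perm (List.range' 1 n) := (π.rotate_perm _).trans hπR
  have hνlen : ν.length = n := by simpa using hνperm.length_eq
  have hνnodup : ν.Nodup := hνperm.nodup_iff.mpr (List.nodup_range')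
  have hπν : π = ν.rotate (π.length - π.idxOf n) := by
    rw [hνdef, List.rotate_rotate, Nat.add_sub_cancel' hidx.le, List.rotate_length]
  obtain ⟨v0, t0, hv0⟩ := List.exists_cons_of_ne_nil (l := ν)
    (by intro h; rw [h] at hνlen; simp at hνlen; omega)
  obtain ⟨y, rest, hv1⟩ := List.exists_cons_of_ne_nil (l := t0)
    (by intro h; rw [h] at hv0; rw [hv0] at hνlen; simp at hνlen; omega)
  rw [hv1] at hv0
  have hv0n : v0 = n := by
    have h : ν[0]? = some n := by
      rw [hνdef, List.getElem?_rotate (by omega), Nat.zero_add, Nat.mod_eq_of_lt hidx,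
        List.getElem?_idxOf hnπ]
    rw [hv0] at h
    simpa using h
  rw [hv0n] at hv0
  clear hv0n
  have hrestlen : rest.length = n - 2 := by
    rw [hv0] at hνlen; simp at hνlen; omega
  have hνnd : (n :: y :: rest).Nodup := hv0 ▸ hνnodup
  have hyn : y ≠ n := by
    intro e
    exact (List.nodup_cons.mp hνnd).1 (by simp [e])
  have hyR : 1 ≤ y ∧ y < 1 + n := by
    have hy : y ∈ ν := by rw [hv0]; simp
    exact List.mem_range'_1.mp (hνperm.mem_iff.mp hy)
  obtain ⟨x, hxdef⟩ : ∃ x, x = osucc n y := ⟨_, rfl⟩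
  have hxfacts : 1 ≤ x ∧ x ≤ n - 1 ∧ x ≠ y := by
    rw [hxdef]; unfold osucc
    split_ifs <;> omega
  have hxn : x ≠ n := by omega
  have hxν : x ∈ ν := hνperm.mem_iff.mpr (List.mem_range'_1.mpr (by omega))
  have hxrest : x ∈ rest := by
    have h := hxν; rw [hv0] at h
    rcases List.mem_cons.mp h with h1 | h1
    · exact absurd h1 hxn
    rcases List.mem_cons.mp h1 with h2 | h2
    · exact absurd h2 hxfacts.2.2
    · exact h2
  have hrlen : (rest.erase x).length = rest.length - 1 := List.length_erase_of_mem hxrest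
  have hmis : mis n (n :: y :: rest.erase x) = x := by rw [hxdef]; rfl
  -- the canonical seed belongs to the set
  have hmem : IsSeed n (n :: y :: rest.erase x) ∧ π ∈ perms n (n :: y :: rest.erase x) := by
    constructor
    · refine ⟨by simp [hrlen]; omega, rfl, ?_⟩
      show (seedToPerm n (n :: y :: rest.erase x)).Perm (List.range' 1 n)
      have h1 : rest.Perm (x :: rest.erase x) := List.perm_cons_erase hxrest
      show (n :: osucc n y :: y :: rest.erase x).Perm (List.range' 1 n)
      rw [← hxdef]
      exact ((List.Perm.swap y x _).cons n).trans
        ((((h1.symm).cons y).cons n).trans (hv0 ▸ hνperm))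
    · refine ⟨rest.idxOf x + 2, π.length - π.idxOf n, ?_, ?_⟩
      · have h := List.idxOf_lt_length_iff.mpr hxrest
        simp [hrlen]; omega
      · rw [hmis]
        have hins : (n :: y :: rest.erase x).insertIdx (rest.idxOf x + 2) x = ν := by
          rw [hv0, show rest.idxOf x + 2 = (rest.idxOf x + 1) + 1 from rfl,
            List.insertIdx_succ_cons, List.insertIdx_succ_cons,
            aux_insertIdx_erase x rest hxrest]
        rw [hins]; exact hπν
  -- every seed whose package contains π has one of two shapes
  have hsub : ∀ ψ : List ℕ, (IsSeed n ψ ∧ π ∈ perms n ψ) →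
      ψ = n :: y :: rest.erase x ∨ ψ = ν.erase y := by
    rintro ψ ⟨⟨hlψ, hhψ, hpermψ⟩, i, j, hij, hπeq⟩
    obtain ⟨w0, s0, hw0⟩ := List.exists_cons_of_ne_nil (l := ψ)
      (by intro h; rw [h] at hlψ; simp at hlψ; omega)
    have hw0n : w0 = n := by rw [hw0] at hhψ; simpa using hhψ
    rw [hw0n] at hw0
    clear hw0n
    obtain ⟨a2, tail, hs0⟩ := List.exists_cons_of_ne_nil (l := s0)
      (by intro h; rw [h] at hw0; rw [hw0] at hlψ; simp at hlψ; omega)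
    rw [hs0] at hw0
    obtain ⟨x', hx'def⟩ : ∃ t, t = osucc n a2 := ⟨_, rfl⟩
    have hmisψ : mis n ψ = x' := by rw [hx'def, hw0]; rfl
    have hstp : seedToPerm n ψ = n :: x' :: a2 :: tail := by rw [hx'def, hw0]; rfl
    have hpermψ' : (n :: x' :: a2 :: tail).Perm (List.range' 1 n) := hstp ▸ hpermψ
    have hndψ' : (n :: x' :: a2 :: tail).Nodup :=
      hpermψ'.nodup_iff.mpr (List.nodup_range')
    have hx'n : x' ≠ n := by
      intro e
      exact (List.nodup_cons.mp hndψ').1 (by simp [e])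
    have hx'ψ : x' ∉ ψ := by
      rw [hw0]
      intro hm
      rcases List.mem_cons.mp hm with h1 | h1
      · exact hx'n h1
      · exact (List.nodup_cons.mp (List.nodup_cons.mp hndψ').2).1 h1
    rw [hmisψ] at hπeq
    set L := ψ.insertIdx i x' with hLdef
    have hLperm : L.Perm (x' :: ψ) := aux_insertIdx_perm x' i ψ hij
    have hLnodup : L.Nodup := by
      refine hLperm.nodup_iff.mpr ?_
      have hsw : (x' :: ψ).Perm (n :: x' :: a2 :: tail) := by
        rw [hw0]; exact List.Perm.swap n x' _
      exact hsw.nodup_iff.mpr hndψ'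
    have hnL : n ∈ L := hLperm.mem_iff.mpr (by rw [hw0]; simp)
    have hνL : ν = L.rotate (L.idxOf n) := by
      rw [hνdef, hπeq]
      exact aux_rot_norm n L hLnodup hnL j
    have hψν : ψ = ν.erase x' := by
      cases i with
      | zero =>
        have hL : L = x' :: ψ := by rw [hLdef, List.insertIdx_zero]
        have hidxL : L.idxOf n = 1 := by
          rw [hL, List.idxOf_cons_ne _ hx'n, hw0, List.idxOf_cons_self]
        have hrot1 : (x' :: ψ).rotate 1 = ψ ++ [x'] := by
          simpa using List.rotate_cons_succ ψ x' 0
        rw [hνL, hidxL, hL, hrot1, List.erase_append_right _ hx'ψ, List.erase_cons_head,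
          List.append_nil]
      | succ i' =>
        have hidxL : L.idxOf n = 0 := by
          rw [hLdef, hw0, List.insertIdx_succ_cons, List.idxOf_cons_self]
        rw [hνL, hidxL, List.rotate_zero, hLdef, aux_erase_insertIdx x' _ ψ hx'ψ]
    by_cases hcase : x' = y
    · right; rw [hψν, hcase]
    · left
      have herase : ν.erase x' = n :: y :: rest.erase x' := by
        rw [hv0, List.erase_cons_tail (by simpa using fun e : n = x' => hx'n e.symm),
          List.erase_cons_tail (by simpa using fun e : y = x' => hcase e.symm)]
      rw [herase, hw0] at hψν
      simp only [List.cons.injEq, true_and] at hψν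
      have hx'x : x' = x := by
        rw [hxdef, ← hψν.1]
        exact hx'def
      rw [hw0, hψν.1, hψν.2, hx'x]
  -- conclude
  have hS1 : (n :: y :: rest.erase x) ∈ {ψ : List ℕ | IsSeed n ψ ∧ π ∈ perms n ψ} := hmem
  have hSsub : {ψ : List ℕ | IsSeed n ψ ∧ π ∈ perms n ψ} ⊆
      ({n :: y :: rest.erase x, ν.erase y} : Set (List ℕ)) := by
    intro ψ hψ
    rcases hsub ψ hψ with h | h <;> simp [h]
  have hfinpair : ({n :: y :: rest.erase x, ν.erase y} : Set (List ℕ)).Finite :=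
    (Set.finite_singleton _).insert _
  have hfin : Set.Finite {ψ : List ℕ | IsSeed n ψ ∧ π ∈ perms n ψ} := hfinpair.subset hSsub
  have hpos : 0 < Set.ncard {ψ : List ℕ | IsSeed n ψ ∧ π ∈ perms n ψ} :=
    (Set.ncard_pos hfin).mpr ⟨_, hS1⟩
  have hle : Set.ncard {ψ : List ℕ | IsSeed n ψ ∧ π ∈ perms n ψ} ≤ 2 := by
    have h1 := Set.ncard_le_ncard hSsub hfinpair
    have h2 : ({n :: y :: rest.erase x, ν.erase y} : Set (List ℕ)).ncard ≤ 2 :=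
      (Set.ncard_insert_le _ _).trans (by simp)
    omega
  omega
end

section
/- For every integer n ≥ 4, two distinct seeds φ and ψ are neighbors (i.e. perms(φ) ∩ perms(ψ) ≠ ∅) if and only if both of the following hold: (i) mis(φ) = mis(ψ)⊕1 or mis(ψ) = mis(φ)⊕1, and (ii) the (n−2)-tuple obtained from φ by deleting the entry mis(ψ) equals the (n−2)-tuple obtained from ψ by deleting the entry mis(φ). -/
-- AUX START
lemma my_erase_insertIdx (a : ℕ) : ∀ (i : ℕ) (l : List ℕ), a ∉ l → i ≤ l.length →
    (l.insertIdx i a).erase a = l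
  | 0, l, h, _ => by simp
  | i+1, [], _, hl => by simp at hl
  | i+1, b :: t, h, hl => by
    have hb : b ≠ a := fun hh => h (hh ▸ (List.mem_cons_self (a := b) (l := t)))
    simp only [List.insertIdx_succ_cons]
    rw [List.erase_cons_tail (by simpa using hb),
      my_erase_insertIdx a i t (fun ht => h (List.mem_cons_of_mem _ ht)) (by simpa using hl)]

lemma my_insertIdx_erase (a : ℕ) : ∀ l : List ℕ, a ∈ l →
    (l.erase a).insertIdx (l.idxOf a) a = l
  | b :: t, h => by
    by_cases hb : b = a
    · subst hb; simp
    · have ht : a ∈ t := by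
        rcases List.mem_cons.1 h with h' | h'
        · exact absurd h'.symm hb
        · exact h'
      rw [List.erase_cons_tail (by simpa using hb), List.idxOf_cons_ne _ hb]
      simpa using my_insertIdx_erase a t ht

lemma rotate_eq_self_of_head {l : List ℕ} (hl : l.Nodup) (hne : l ≠ []) (k : ℕ)
    (hh : (l.rotate k).head? = l.head?) : l.rotate k = l := by
  have hlen : 0 < l.length := List.length_pos_iff.2 hne
  rw [← List.rotate_mod] at hh ⊢
  have hk : k % l.length < l.length := Nat.mod_lt _ hlen
  rw [List.head?_rotate hk] at hh
  have h0 : l.head? = l[0]? := by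
    cases l with
    | nil => simp
    | cons a t => simp
  rw [h0, List.getElem?_eq_getElem hk, List.getElem?_eq_getElem hlen] at hh
  have : k % l.length = 0 := (List.Nodup.getElem_inj_iff hl).1 (Option.some_inj.1 hh)
  rw [this, List.rotate_zero]

/-- Structure of a seed. -/
lemma seed_shape (n : ℕ) (hn : 4 ≤ n) (φ : List ℕ) (h : IsSeed n φ) :
    ∃ b r, φ = n :: b :: r ∧ mis n φ = osucc n b ∧
      ((mis n φ) :: φ).Perm (List.range' 1 n) := by
  obtain ⟨hlen, hhead, hperm⟩ := h
  match φ, hlen, hhead, hperm with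
  | [], hlen, hhead, _ => simp at hhead
  | [a], hlen, hhead, _ => simp at hlen; omega
  | a :: b :: r, hlen, hhead, hperm =>
    have ha : a = n := by simpa using hhead
    subst ha
    exact ⟨b, r, rfl, rfl, (List.Perm.swap _ _ _).trans hperm⟩

lemma neighbor_construct (n : ℕ) (hn : 4 ≤ n) (φ ψ : List ℕ)
    (hφ : IsSeed n φ) (hψ : IsSeed n ψ)
    (h1 : mis n ψ = osucc n (mis n φ))
    (h2 : φ.erase (mis n ψ) = ψ.erase (mis n φ)) :
    ∃ π, π ∈ perms n φ ∧ π ∈ perms n ψ := by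
  obtain ⟨b, r, hφe, hmφ, hpφ⟩ := seed_shape n hn φ hφ
  obtain ⟨c, s, hψe, hmψ, hpψ⟩ := seed_shape n hn ψ hψ
  set x := mis n φ with hxdef
  set y := mis n ψ with hydef
  -- nodup facts
  have hndφ : (x :: φ).Nodup := hpφ.nodup_iff.2 (List.nodup_range' (s := 1) (n := n))
  have hndψ : (y :: ψ).Nodup := hpψ.nodup_iff.2 (List.nodup_range' (s := 1) (n := n))
  -- ranges
  have hbmem : b ∈ List.range' 1 n := hpφ.subset (by rw [hφe]; simp)
  have hcmem : c ∈ List.range' 1 n := hpψ.subset (by rw [hψe]; simp)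
  have hbn : b ≠ n := by
    have := hndφ.of_cons
    rw [hφe] at this
    simp only [List.nodup_cons, List.mem_cons] at this
    exact fun h => this.1 (Or.inl h.symm)
  have hcn : c ≠ n := by
    have := hndψ.of_cons
    rw [hψe] at this
    simp only [List.nodup_cons, List.mem_cons] at this
    exact fun h => this.1 (Or.inl h.symm)
  have hbr : 1 ≤ b ∧ b ≤ n - 1 := by
    rw [List.mem_range'_1] at hbmem; omega
  have hcr : 1 ≤ c ∧ c ≤ n - 1 := by
    rw [List.mem_range'_1] at hcmem; omega
  have hxr : 1 ≤ x ∧ x ≤ n - 1 := by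
    rw [hmφ]; simp only [osucc]; split_ifs <;> omega
  have hyr : 1 ≤ y ∧ y ≤ n - 1 := by
    rw [hmψ]; simp only [osucc]; split_ifs <;> omega
  -- c = x
  have hcx : c = x := by
    have e1 : osucc n c = osucc n x := by rw [← hmψ, h1]
    simp only [osucc] at e1; split_ifs at e1 <;> omega
  subst hcx
  -- y ∈ φ, y ≠ x
  have hyx : y ≠ x := by
    rw [h1]; simp only [osucc]; split_ifs <;> omega
  have hyφ : y ∈ φ := by
    have : y ∈ x :: φ := hpφ.mem_iff.2 (List.mem_range'_1.2 (by omega))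
    rcases List.mem_cons.1 this with h | h
    · exact absurd h hyx
    · exact h
  -- erase of ψ
  have hψerase : ψ.erase x = n :: s := by
    rw [hψe, List.erase_cons_tail (by simp; omega), List.erase_cons_head]
  have hρ : φ.erase y = n :: s := h2.trans hψerase
  set k := φ.idxOf y with hkdef
  have hklt : k < φ.length := List.idxOf_lt_length_iff.2 hyφ
  have hk1 : 1 ≤ k := by
    have : φ.idxOf y = (b :: r).idxOf y + 1 := by
      rw [hφe]; exact List.idxOf_cons_ne _ (by omega)
    omega
  have hφrec : (n :: s).insertIdx k y = φ := by
    rw [← hρ]; exact my_insertIdx_erase y φ hyφ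
  have hψrec : (n :: s).insertIdx 1 x = ψ := by rw [hψe]; rfl
  have hslen : s.length = n - 3 := by
    have := hψ.1; rw [hψe] at this; simp at this; omega
  have hφlen : φ.length = n - 1 := hφ.1
  have key : ψ.insertIdx (k + 1) y = φ.insertIdx 1 x := by
    rw [← hψrec, ← hφrec]
    exact List.insertIdx_comm x y (i := 1) (j := k) (l := n :: s) hk1 (by simp; omega)
  refine ⟨φ.insertIdx 1 x, ⟨1, 0, by omega, by rw [List.rotate_zero]⟩,
    ⟨k + 1, 0, by rw [hψ.1]; omega, by rw [List.rotate_zero, key]⟩⟩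


/-- two distinct seeds are neighbors iff their missing elements are
cyclically consecutive and deleting each other's missing element yields the same
(n−2)-tuple. -/
theorem neighbors_iff (n : ℕ) (hn : 4 ≤ n) (φ ψ : List ℕ)
    (hφ : IsSeed n φ) (hψ : IsSeed n ψ) (hne : φ ≠ ψ) :
    (perms n φ ∩ perms n ψ).Nonempty ↔
      ((mis n φ = osucc n (mis n ψ) ∨ mis n ψ = osucc n (mis n φ)) ∧
        φ.erase (mis n ψ) = ψ.erase (mis n φ)) := by
  obtain ⟨b, r, hφe, hmφ, hpφ⟩ := seed_shape n hn φ hφ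
  obtain ⟨c, s, hψe, hmψ, hpψ⟩ := seed_shape n hn ψ hψ
  set x := mis n φ with hxdef
  set y := mis n ψ with hydef
  have hndφ : (x :: φ).Nodup := hpφ.nodup_iff.2 (List.nodup_range' (s := 1) (n := n))
  have hndψ : (y :: ψ).Nodup := hpψ.nodup_iff.2 (List.nodup_range' (s := 1) (n := n))
  have hxφ : x ∉ φ := (List.nodup_cons.1 hndφ).1
  have hyψ : y ∉ ψ := (List.nodup_cons.1 hndψ).1
  have hφlen : φ.length = n - 1 := hφ.1
  have hψlen : ψ.length = n - 1 := hψ.1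
  constructor
  · rintro ⟨π, hπφ, hπψ⟩
    obtain ⟨i, j, hi, hA⟩ := hπφ
    obtain ⟨i', j', hi', hB⟩ := hπψ
    -- canonical insertion indices
    obtain ⟨i₁, hi₁pos, hi₁le, hrotA⟩ :
        ∃ i₁, 1 ≤ i₁ ∧ i₁ ≤ φ.length ∧ (φ.insertIdx i x) ~r (φ.insertIdx i₁ x) := by
      cases i with
      | zero =>
        refine ⟨φ.length, by omega, le_rfl, ?_⟩
        rw [List.insertIdx_zero, List.insertIdx_length_self]
        exact ⟨1, by simpa using List.rotate_cons_succ φ x 0⟩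
      | succ m => exact ⟨m + 1, by omega, hi, List.IsRotated.refl _⟩
    obtain ⟨i₂, hi₂pos, hi₂le, hrotB⟩ :
        ∃ i₂, 1 ≤ i₂ ∧ i₂ ≤ ψ.length ∧ (ψ.insertIdx i' y) ~r (ψ.insertIdx i₂ y) := by
      cases i' with
      | zero =>
        refine ⟨ψ.length, by omega, le_rfl, ?_⟩
        rw [List.insertIdx_zero, List.insertIdx_length_self]
        exact ⟨1, by simpa using List.rotate_cons_succ ψ y 0⟩
      | succ m => exact ⟨m + 1, by omega, hi', List.IsRotated.refl _⟩
    have hA' : (φ.insertIdx i x) ~r π := ⟨j, hA.symm⟩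
    have hB' : (ψ.insertIdx i' y) ~r π := ⟨j', hB.symm⟩
    have hAB : (φ.insertIdx i₁ x) ~r (ψ.insertIdx i₂ y) :=
      hrotA.symm.trans (hA'.trans (hB'.symm.trans hrotB))
    obtain ⟨k, hk⟩ := hAB
    -- heads are n
    have hheadA : (φ.insertIdx i₁ x).head? = some n := by
      obtain ⟨m₁, rfl⟩ : ∃ m₁, i₁ = m₁ + 1 := ⟨i₁ - 1, by omega⟩
      rw [hφe, List.insertIdx_succ_cons]; rfl
    have hheadB : (ψ.insertIdx i₂ y).head? = some n := by
      obtain ⟨m₂, rfl⟩ : ∃ m₂, i₂ = m₂ + 1 := ⟨i₂ - 1, by omega⟩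
      rw [hψe, List.insertIdx_succ_cons]; rfl
    have hndA : (φ.insertIdx i₁ x).Nodup :=
      ((List.perm_insertIdx x φ hi₁le).trans hpφ).nodup_iff.2 (List.nodup_range' (s := 1) (n := n))
    have hAne : φ.insertIdx i₁ x ≠ [] := by
      intro h; rw [h] at hheadA; simp at hheadA
    have hEq : φ.insertIdx i₁ x = ψ.insertIdx i₂ y := by
      rw [← hk]; rw [← hk] at hheadB
      exact (rotate_eq_self_of_head hndA hAne k (hheadB.trans hheadA.symm)).symm
    have heraseφ : (φ.insertIdx i₁ x).erase x = φ := my_erase_insertIdx x i₁ φ hxφ hi₁le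
    have heraseψ : (ψ.insertIdx i₂ y).erase y = ψ := my_erase_insertIdx y i₂ ψ hyψ hi₂le
    have hxy : x ≠ y := by
      intro h
      apply hne
      rw [← heraseφ, hEq, h, heraseψ]
    have hii : φ.erase y = ψ.erase x := by
      rw [← heraseφ, List.erase_comm, hEq, heraseψ]
    refine ⟨?_, hii⟩
    -- second entries
    obtain ⟨m₁, rfl⟩ : ∃ m₁, i₁ = m₁ + 1 := ⟨i₁ - 1, by omega⟩
    obtain ⟨m₂, rfl⟩ : ∃ m₂, i₂ = m₂ + 1 := ⟨i₂ - 1, by omega⟩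
    have h2nd := congrArg (fun l => l.getD 1 0) hEq
    rw [hφe, hψe] at h2nd
    simp only [List.insertIdx_succ_cons] at h2nd
    cases m₁ with
    | zero =>
      cases m₂ with
      | zero =>
        simp only [List.insertIdx_zero] at h2nd
        exact absurd (by simpa using h2nd) hxy
      | succ m₂' =>
        right
        simp only [List.insertIdx_succ_cons] at h2nd
        have : x = c := by simpa using h2nd
        rw [hmψ, ← this]
    | succ m₁' =>
      cases m₂ with
      | zero =>
        left
        simp only [List.insertIdx_zero, List.insertIdx_succ_cons] at h2nd
        have : b = y := by simpa using h2nd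
        rw [hmφ, this]
      | succ m₂' =>
        simp only [List.insertIdx_succ_cons] at h2nd
        have hbc : b = c := by simpa using h2nd
        exact absurd (by rw [hmφ, hmψ, hbc]) hxy
  · rintro ⟨h1 | h1, h2⟩
    · obtain ⟨π, hπψ, hπφ⟩ := neighbor_construct n hn ψ φ hψ hφ h1 h2.symm
      exact ⟨π, hπφ, hπψ⟩
    · obtain ⟨π, hπφ, hπψ⟩ := neighbor_construct n hn φ ψ hφ hψ h1 h2
      exact ⟨π, hπφ, hπψ⟩
end

section
/- For every integer n ≥ 5 and distinct seeds φ, ψ whose packages intersect (perms(φ) ∩ perms(ψ) ≠ ∅), exactly one of φ = parent(ψ) or ψ = parent(φ) holds; moreover, if φ = parent(ψ) then ψ = son(φ, i) for some i with 1 ≤ i ≤ n−3. -/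
namespace SWAux
open List

lemma sig_iterate (l : List ℕ) (i : ℕ) : sig^[i] l = l.rotate i := by
  induction i generalizing l with
  | zero => simp
  | succ k ih =>
    rw [Function.iterate_succ_apply, ih]
    show (l.rotate 1).rotate k = _
    rw [rotate_rotate, Nat.add_comm]

lemma insertIdx_take_drop (x : ℕ) : ∀ (l : List ℕ) (m : ℕ), m ≤ l.length →
    l.insertIdx m x = l.take m ++ x :: l.drop m := by
  intro l
  induction l with
  | nil => intro m hm; simp at hm; subst hm; simp
  | cons a t ih =>
    intro m hm
    cases m with
    | zero => simp
    | succ k =>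
      simp only [insertIdx_succ_cons, take, drop, cons_append]
      rw [ih k (by simpa using hm)]

lemma erase_insertIdx (x : ℕ) : ∀ (l : List ℕ) (i : ℕ), x ∉ l →
    (l.insertIdx i x).erase x = l := by
  intro l
  induction l with
  | nil => intro i _; cases i <;> simp
  | cons a t ih =>
    intro i hx
    cases i with
    | zero => simp
    | succ k =>
      rw [insertIdx_succ_cons, erase_cons_tail (by simp; rintro rfl; exact hx (mem_cons_self)),
        ih k (fun h => hx (mem_cons_of_mem a h))]

lemma insertIdx_idxOf_erase (x : ℕ) : ∀ (l : List ℕ), x ∈ l →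
    (l.erase x).insertIdx (l.idxOf x) x = l := by
  intro l
  induction l with
  | nil => simp
  | cons a t ih =>
    intro hx
    by_cases h : a = x
    · subst h; simp
    · rw [erase_cons_tail (by simpa using h), idxOf_cons_ne _ (by simpa using h),
        insertIdx_succ_cons, ih (by rcases mem_cons.1 hx with h'|h'; exact absurd h'.symm h; exact h')]

lemma head?_norm (nn : ℕ) (l : List ℕ) (h : nn ∈ l) :
    (l.rotate (l.idxOf nn)).head? = some nn := by
  rw [head?_rotate (idxOf_lt_length_iff.2 h)]
  simp [getElem?_eq_getElem (idxOf_lt_length_iff.2 h)]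

lemma rotate_eq_norm (nn : ℕ) (l : List ℕ) (hnd : l.Nodup) (h : nn ∈ l) (k : ℕ)
    (hk : (l.rotate k).head? = some nn) : l.rotate k = l.rotate (l.idxOf nn) := by
  have hl : 0 < l.length := length_pos_iff.2 (ne_nil_of_mem h)
  rw [← rotate_mod] at hk ⊢
  have hklt : k % l.length < l.length := Nat.mod_lt _ hl
  rw [head?_rotate hklt, getElem?_eq_getElem hklt] at hk
  have h2 : l[k % l.length] = nn := by simpa using hk
  have hidx : idxOf nn l < l.length := idxOf_lt_length_iff.2 h
  have h3 : l[k % l.length] = l[l.idxOf nn] := by rw [h2, getElem_idxOf]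
  have : k % l.length = l.idxOf nn := (hnd.getElem_inj_iff (hi := hklt) (hj := hidx)).mp h3
  rw [this]

lemma norm_rotate (nn : ℕ) (π : List ℕ) (j : ℕ) (hnd : π.Nodup) (h : nn ∈ π) :
    (π.rotate j).rotate ((π.rotate j).idxOf nn) = π.rotate (π.idxOf nn) := by
  have h' : nn ∈ π.rotate j := (rotate_perm π j).mem_iff.2 h
  have := head?_norm nn (π.rotate j) h'
  rw [rotate_rotate] at this ⊢
  exact rotate_eq_norm nn π hnd h _ this

lemma rotShift (l : List ℕ) (x : ℕ) (m : ℕ) (h : m ≤ l.length) :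
    sig^[l.length + 1 - m] (x :: l.rotate m) = l.insertIdx m x := by
  rw [sig_iterate, rotate_eq_drop_append_take h,
    show x :: (l.drop m ++ l.take m) = (x :: l.drop m) ++ l.take m from rfl,
    rotate_eq_drop_append_take (by simp; omega)]
  have hlen : l.length + 1 - m = (x :: l.drop m).length := by simp; omega
  rw [hlen, drop_left, take_left, insertIdx_take_drop x l m h]

end SWAux


namespace SWAux
open List

lemma osucc_bounds {n a : ℕ} (hn : 5 ≤ n) (h1 : 1 ≤ a) (h2 : a ≤ n - 1) :
    1 ≤ osucc n a ∧ osucc n a ≤ n - 1 := by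
  unfold osucc; split_ifs <;> omega

lemma osucc_ne {n a : ℕ} (hn : 5 ≤ n) (h1 : 1 ≤ a) (h2 : a ≤ n - 1) :
    osucc n a ≠ a := by
  unfold osucc; split_ifs <;> omega

lemma osucc_osucc_ne {n a : ℕ} (hn : 5 ≤ n) (h1 : 1 ≤ a) (h2 : a ≤ n - 1) :
    osucc n (osucc n a) ≠ a := by
  unfold osucc; split_ifs <;> omega

lemma seed_shape {n : ℕ} (hn : 5 ≤ n) {ψ : List ℕ} (hψ : IsSeed n ψ) :
    ∃ a2 t, ψ = n :: a2 :: t ∧ 1 ≤ a2 ∧ a2 ≤ n - 1 ∧ mis n ψ = osucc n a2 ∧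
      1 ≤ mis n ψ ∧ mis n ψ ≤ n - 1 ∧ mis n ψ ∉ ψ ∧
      (seedToPerm n ψ = n :: mis n ψ :: a2 :: t) := by
  obtain ⟨hlen, hhd, hp⟩ := hψ
  obtain ⟨T, rfl⟩ : ∃ T, ψ = n :: T := by
    cases ψ with
    | nil => simp at hhd
    | cons a T => simp only [head?_cons, Option.some.injEq] at hhd; exact ⟨T, by rw [hhd]⟩
  obtain ⟨a2, t, rfl⟩ : ∃ a2 t, T = a2 :: t := by
    cases T with
    | nil => simp at hlen; omega
    | cons a2 t => exact ⟨_, _, rfl⟩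
  have hsp : seedToPerm n (n :: a2 :: t) = n :: osucc n a2 :: a2 :: t := rfl
  have hmis : mis n (n :: a2 :: t) = osucc n a2 := rfl
  have hnd : (n :: osucc n a2 :: a2 :: t).Nodup := by
    rw [← hsp]; exact hp.nodup_iff.mpr (nodup_range' (s := 1) (n := n))
  have ha2mem : a2 ∈ List.range' 1 n := hp.subset (by rw [hsp]; simp)
  rw [mem_range'_1] at ha2mem
  have ha2n : a2 ≠ n := by
    have h2 := hnd; simp only [nodup_cons, mem_cons] at h2
    exact fun h => h2.1 (Or.inr (Or.inl h.symm))
  have hb : 1 ≤ a2 ∧ a2 ≤ n - 1 := ⟨ha2mem.1, by omega⟩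
  have hxb := osucc_bounds hn hb.1 hb.2
  refine ⟨a2, t, rfl, hb.1, hb.2, hmis, by rw [hmis]; exact hxb.1,
    by rw [hmis]; exact hxb.2, ?_, by rw [hmis]; exact hsp⟩
  rw [hmis]
  simp only [nodup_cons, mem_cons] at hnd
  intro hmem
  rcases mem_cons.1 hmem with h | h
  · exact hnd.1 (Or.inl h.symm)
  · exact hnd.2.1 (mem_cons.1 h)

/-- key membership lemma -/
lemma perms_mem {n : ℕ} (hn : 5 ≤ n) {ψ π : List ℕ} (hψ : IsSeed n ψ)
    (hπ : π ∈ perms n ψ) :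
    π.Perm (List.range' 1 n) ∧ (π.rotate (π.idxOf n)).erase (mis n ψ) = ψ := by
  obtain ⟨a2, t, hform, _, _, _, _, _, hxnot, hsp⟩ := seed_shape hn hψ
  obtain ⟨i, j, hi, rfl⟩ := hπ
  set x := mis n ψ with hx
  have hpp : seedToPerm n ψ ~ List.range' 1 n := hψ.2.2
  have hA : ψ.insertIdx i x ~ List.range' 1 n := by
    refine ((perm_insertIdx x ψ hi).trans ?_).trans hpp
    rw [hsp, hform]
    exact Perm.swap _ _ _
  have hπperm : (ψ.insertIdx i x).rotate j ~ List.range' 1 n :=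
    (rotate_perm _ j).trans hA
  refine ⟨hπperm, ?_⟩
  have hnd : (ψ.insertIdx i x).Nodup := hA.nodup_iff.mpr (nodup_range' (s := 1) (n := n))
  have hnmem : n ∈ ψ.insertIdx i x := hA.mem_iff.2 (by rw [mem_range'_1]; omega)
  rw [norm_rotate n _ j hnd hnmem]
  have hxn : x ≠ n := by
    have hndsp : (seedToPerm n ψ).Nodup := hpp.nodup_iff.mpr (nodup_range' (s := 1) (n := n))
    rw [hsp] at hndsp
    simp only [nodup_cons, mem_cons] at hndsp
    exact fun h => hndsp.1 (Or.inl h.symm)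
  cases i with
  | zero =>
    rw [hform]
    simp only [insertIdx_zero]
    have hidx : (x :: n :: a2 :: t).idxOf n = 1 := by
      rw [idxOf_cons_ne _ (by simpa using hxn), idxOf_cons_self]
    rw [hidx, show (x :: n :: a2 :: t).rotate 1 = (n :: a2 :: t) ++ [x] by
      rw [rotate_cons_succ, rotate_zero]]
    rw [erase_append_right _ (hform ▸ hxnot), erase_cons_head]
    simp
  | succ k =>
    rw [hform, insertIdx_succ_cons]
    rw [idxOf_cons_self, rotate_zero]
    rw [erase_cons_tail (by simpa using Ne.symm hxn),
      erase_insertIdx x (a2 :: t) k (fun h => hxnot (hform ▸ mem_cons_of_mem n h))]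

lemma shape3 (L : List ℕ) (m : ℕ) (h : L.head? = some m) (hlen : 4 ≤ L.length) :
    ∃ q q' R, L = m :: q :: q' :: R := by
  match L, h, hlen with
  | a :: b :: c :: T, h, hlen =>
    simp only [head?_cons, Option.some.injEq] at h
    exact ⟨b, c, T, by rw [h]⟩

lemma decRun_cons_cons (n a b : ℕ) (rest : List ℕ) :
    decRun n (a :: b :: rest) = if a = osucc n b then decRun n (b :: rest) + 1 else 1 := by
  rw [decRun]

lemma decRun_pos (n a : ℕ) (r : List ℕ) : 1 ≤ decRun n (a :: r) := by
  cases r with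
  | nil => simp [decRun]
  | cons b r' => rw [decRun_cons_cons]; split <;> omega

lemma main_case {n : ℕ} (hn : 5 ≤ n) {φ ψ : List ℕ}
    (hφ : IsSeed n φ) (hψ : IsSeed n ψ) (hne : φ ≠ ψ)
    (hint : (perms n φ ∩ perms n ψ).Nonempty)
    {q q' : ℕ} {R : List ℕ}
    (hLperm : (n :: q :: q' :: R).Perm (List.range' 1 n))
    (hLφ : (n :: q :: q' :: R).erase (mis n φ) = φ)
    (hLψ : (n :: q :: q' :: R).erase (mis n ψ) = ψ)
    (hmψ : mis n ψ = q) (hmφ : mis n φ = osucc n q) :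
    IsParent n φ ψ ∧ ∃ i, 1 ≤ i ∧ i ≤ n - 3 ∧ IsSon n ψ φ i := by
  have hnd : (n :: q :: q' :: R).Nodup := hLperm.nodup_iff.mpr (nodup_range' (s := 1) (n := n))
  have hlen : (n :: q :: q' :: R).length = n := by rw [hLperm.length_eq, length_range']
  have hRlen : R.length = n - 3 := by simp at hlen; omega
  obtain ⟨aψ, tψ, hψform, _, _, hmisψ, hq1, hq2, hψnot, _⟩ := seed_shape hn hψ
  rw [hmψ] at hq1 hq2
  obtain ⟨aφ, tφ, hφform, _, _, hmisφ, hx1, hx2, hφnot, _⟩ := seed_shape hn hφ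
  rw [hmφ] at hx1 hx2
  have hqn : q ≠ n := by omega
  have hψeq : ψ = n :: q' :: R := by
    rw [← hLψ, hmψ, erase_cons_tail (by simpa using Ne.symm hqn), erase_cons_head]
  have haψ : aψ = q' ∧ tψ = R := by
    rw [hψeq] at hψform
    simpa using hψform.symm
  have hqq' : q = osucc n q' := by rw [← hmψ, hmisψ, haψ.1]
  have hq'1 : 1 ≤ q' := by
    have : q' ∈ List.range' 1 n := hLperm.subset (by simp)
    rw [mem_range'_1] at this; omega
  have hq'2 : q' ≤ n - 1 := by
    have hm : q' ∈ List.range' 1 n := hLperm.subset (by simp)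
    rw [mem_range'_1] at hm
    have : q' ≠ n := by
      simp only [nodup_cons, mem_cons] at hnd
      exact fun h => hnd.1 (Or.inr (Or.inl h.symm))
    omega
  have hx'n : osucc n q ≠ n := by omega
  have hx'q : osucc n q ≠ q := osucc_ne hn hq1 hq2
  have hx'q' : osucc n q ≠ q' := by
    rw [hqq']; exact osucc_osucc_ne hn hq'1 hq'2
  have hx'L : osucc n q ∈ n :: q :: q' :: R :=
    hLperm.mem_iff.mpr (mem_range'_1.mpr ⟨hx1, by omega⟩)
  have hx'R : osucc n q ∈ R := by
    simp only [mem_cons] at hx'L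
    rcases hx'L with h|h|h|h
    · exact absurd h hx'n
    · exact absurd h hx'q
    · exact absurd h hx'q'
    · exact h
  have hφeq : φ = n :: q :: q' :: R.erase (osucc n q) := by
    rw [← hLφ, hmφ, erase_cons_tail (by simpa using Ne.symm hx'n),
      erase_cons_tail (by simpa using Ne.symm hx'q),
      erase_cons_tail (by simpa using Ne.symm hx'q')]
  have hφlen : φ.length = n - 1 := hφ.1
  set k := R.idxOf (osucc n q) with hkdef
  have hk : k < n - 3 := by
    have := idxOf_lt_length_iff.2 hx'R
    omega
  have hRrec : (R.erase (osucc n q)).insertIdx k (osucc n q) = R :=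
    insertIdx_idxOf_erase _ R hx'R
  have htilde : tildeSeed n ψ = n :: q :: q' :: R := by
    rw [hψeq]
    show n :: mis n (n :: q' :: R) :: q' :: R = _
    have h1 : mis n (n :: q' :: R) = osucc n q' := rfl
    rw [h1, ← hqq']
  have hins : φ.insertIdx (k + 3) (osucc n q) = n :: q :: q' :: R := by
    rw [hφeq]
    show List.insertIdx (n :: q :: q' :: R.erase (osucc n q)) (k+3) (osucc n q) = _
    rw [show k + 3 = (k + 2) + 1 by ring, insertIdx_succ_cons,
      show k + 2 = (k + 1) + 1 by ring, insertIdx_succ_cons, insertIdx_succ_cons, hRrec]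
  have hheight : 1 < height n φ := by
    have h1 : height n φ = decRun n (q :: q' :: R.erase (osucc n q)) := by
      rw [hφeq]; rfl
    rw [h1, decRun_cons_cons, if_pos hqq']
    have := decRun_pos n q' (R.erase (osucc n q))
    omega
  refine ⟨⟨hφ, hψ, hne, hint, hheight, by rw [hmφ, hmψ]⟩, n - 3 - k, by omega, by omega, hψ, ?_⟩
  show sig^[n - 3 - k] (mis n φ :: φ.rotate (n - (n - 3 - k))) = tildeSeed n ψ
  rw [hmφ, htilde, ← hins, show n - (n - 3 - k) = k + 3 by omega]
  have := rotShift φ (osucc n q) (k + 3) (by omega)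
  rw [hφlen] at this
  rw [show n - 3 - k = n - 1 + 1 - (k + 3) by omega]
  exact this

end SWAux

/-- for distinct seeds with intersecting packages, exactly one of
φ = parent(ψ) or ψ = parent(φ) holds, and if φ = parent(ψ) then ψ = son(φ, i)
for some 1 ≤ i ≤ n−3. -/
theorem neighbors_parent_son (n : ℕ) (hn : 5 ≤ n) (φ ψ : List ℕ)
    (hφ : IsSeed n φ) (hψ : IsSeed n ψ) (hne : φ ≠ ψ)
    (hint : (perms n φ ∩ perms n ψ).Nonempty) :
    Xor' (IsParent n φ ψ) (IsParent n ψ φ) ∧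
    (IsParent n φ ψ → ∃ i, 1 ≤ i ∧ i ≤ n - 3 ∧ IsSon n ψ φ i) := by
  classical
  obtain ⟨π, hπφ, hπψ⟩ := hint
  obtain ⟨hπperm, hLφ⟩ := SWAux.perms_mem hn hφ hπφ
  obtain ⟨-, hLψ⟩ := SWAux.perms_mem hn hψ hπψ
  have hnmem : n ∈ π := hπperm.mem_iff.mpr (List.mem_range'_1.mpr ⟨by omega, by omega⟩)
  have hhead : (π.rotate (π.idxOf n)).head? = some n := SWAux.head?_norm n π hnmem
  have hLperm0 : (π.rotate (π.idxOf n)).Perm (List.range' 1 n) :=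
    (List.rotate_perm _ _).trans hπperm
  have hLlen : (π.rotate (π.idxOf n)).length = n := by
    rw [hLperm0.length_eq, List.length_range']
  obtain ⟨q, q', R, hL⟩ := SWAux.shape3 (π.rotate (π.idxOf n)) n hhead (by omega)
  rw [hL] at hLφ hLψ
  have hLperm : (n :: q :: q' :: R).Perm (List.range' 1 n) := hL ▸ hLperm0
  have hmm : mis n φ ≠ mis n ψ := fun h => hne (by rw [← hLφ, ← hLψ, h])
  have key : ∀ θ : List ℕ, IsSeed n θ → (n :: q :: q' :: R).erase (mis n θ) = θ →
      mis n θ ≠ q → mis n θ = osucc n q := by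
    intro θ hθ hLθ hneq
    obtain ⟨a2, t, hform, _, _, hmis, hm1, hm2, _, _⟩ := SWAux.seed_shape hn hθ
    have hmn : mis n θ ≠ n := by omega
    have hcomp : (n :: q :: q' :: R).erase (mis n θ) =
        n :: q :: ((q' :: R).erase (mis n θ)) := by
      rw [List.erase_cons_tail (by simpa using Ne.symm hmn),
        List.erase_cons_tail (by simpa using Ne.symm hneq)]
    have heq : n :: q :: ((q' :: R).erase (mis n θ)) = n :: a2 :: t :=
      hcomp.symm.trans (hLθ.trans hform)
    have ha2 : a2 = q := by
      have h2 := heq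
      simp only [List.cons.injEq, true_and] at h2
      exact h2.1.symm
    rw [hmis, ha2]
  have hint' : (perms n φ ∩ perms n ψ).Nonempty := ⟨π, hπφ, hπψ⟩
  by_cases hq : mis n ψ = q
  · have hmφ : mis n φ = osucc n q := key φ hφ hLφ (by rw [← hq] at *; exact hmm)
    obtain ⟨hpar, hson⟩ := SWAux.main_case hn hφ hψ hne hint' hLperm hLφ hLψ hq hmφ
    obtain ⟨_, _, _, _, _, _, hq1, hq2, _, _⟩ := SWAux.seed_shape hn hψ
    rw [hq] at hq1 hq2
    refine ⟨Or.inl ⟨hpar, ?_⟩, fun _ => hson⟩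
    intro hP
    have := hP.2.2.2.2.2
    rw [hq, hmφ] at this
    exact SWAux.osucc_osucc_ne hn hq1 hq2 this.symm
  · have hmψ : mis n ψ = osucc n q := key ψ hψ hLψ hq
    have hmφ : mis n φ = q := by
      by_contra hq'
      exact hmm (by rw [key φ hφ hLφ hq', hmψ])
    obtain ⟨hpar, -⟩ := SWAux.main_case hn hψ hφ hne.symm
      ⟨π, hπψ, hπφ⟩ hLperm hLψ hLφ hmφ hmψ
    obtain ⟨_, _, _, _, _, _, hq1, hq2, _, _⟩ := SWAux.seed_shape hn hφ
    rw [hmφ] at hq1 hq2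
    have hnot : ¬ IsParent n φ ψ := by
      intro hP
      have := hP.2.2.2.2.2
      rw [hmφ, hmψ] at this
      exact SWAux.osucc_osucc_ne hn hq1 hq2 this.symm
    exact ⟨Or.inr ⟨hpar, hnot⟩, fun h => absurd h hnot⟩
end

section
/- For every integer n ≥ 6 and every non-hub seed φ with height(φ) = k where 1 < k ≤ n−4: for every i ∈ {1, …, n−3} the i-th son son(φ, i) exists (i.e. there is a seed β with σ^i(φ^(i)) = β̃), every seed β with parent(β) = φ equals son(φ, i) for exactly one such i, and height(son(φ, i)) = Δ(k, i) = min(k−1, n−2−i). -/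
lemma sig_iter (l : List ℕ) (i : ℕ) : sig^[i] l = l.rotate i := by
  induction i generalizing l with
  | zero => simp
  | succ m ih =>
    rw [Function.iterate_succ_apply, ih]
    show (l.rotate 1).rotate m = _
    rw [List.rotate_rotate]
    congr 1; omega

lemma insertIdx_eq_take_drop (x : ℕ) : ∀ (m : ℕ) (l : List ℕ), m ≤ l.length →
    l.insertIdx m x = l.take m ++ x :: l.drop m := by
  intro m
  induction m with
  | zero => intro l _; simp
  | succ m ih =>
    intro l hl
    cases l with
    | nil => simp at hl
    | cons a t =>
      have := ih t (by simpa using hl)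
      simp [List.insertIdx, this]
      exact this

lemma osucc_pos (n a : ℕ) : 0 < osucc n a := by
  unfold osucc; split <;> omega

lemma osucc_inj {n a b : ℕ} (ha : 0 < a) (hb : 0 < b) (h : osucc n a = osucc n b) : a = b := by
  unfold osucc at h; split_ifs at h <;> omega

lemma osucc_iter_mod {n : ℕ} (h2 : 3 ≤ n) {a : ℕ} (ha : 1 ≤ a) (han : a ≤ n - 1) (m : ℕ) :
    (osucc n)^[m] a = (a - 1 + m) % (n - 1) + 1 := by
  induction m with
  | zero => simp [Nat.mod_eq_of_lt (by omega : a - 1 < n - 1)]; omega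
  | succ m ih =>
    rw [Function.iterate_succ_apply', ih]
    unfold osucc
    have hlt : (a - 1 + m) % (n - 1) < n - 1 := Nat.mod_lt _ (by omega)
    split_ifs with h
    · have : (a - 1 + (m + 1)) % (n - 1) = 0 := by
        have e : a - 1 + (m + 1) = (a - 1 + m) + 1 := by omega
        rw [e, Nat.add_mod]
        rw [show 1 % (n-1) = 1 from Nat.mod_eq_of_lt (by omega),
          show (a-1+m) % (n-1) = n - 2 by omega,
          show n - 2 + 1 = n - 1 by omega, Nat.mod_self]
      omega
    · have : (a - 1 + (m + 1)) % (n - 1) = (a - 1 + m) % (n - 1) + 1 := by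
        have e : a - 1 + (m + 1) = (a - 1 + m) + 1 := by omega
        rw [e, Nat.add_mod]
        have : ((a -1 + m) % (n-1) + 1 % (n-1)) = (a-1+m) % (n-1) + 1 := by
          congr 1; exact Nat.mod_eq_of_lt (by omega)
        rw [this, Nat.mod_eq_of_lt]; omega
      omega

lemma osucc_iter_ne {n : ℕ} (h2 : 3 ≤ n) {a m : ℕ} (ha : 1 ≤ a) (han : a ≤ n - 1)
    (hm0 : 0 < m) (hm : m < n - 1) : (osucc n)^[m] a ≠ a := by
  rw [osucc_iter_mod h2 ha han]
  intro h
  have h1 : (a - 1 + m) % (n - 1) = a - 1 := by omega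
  obtain ⟨q, hq⟩ : ∃ q, a - 1 + m = (n-1) * q + (a - 1) := by
    refine ⟨(a - 1 + m) / (n-1), ?_⟩
    conv_lhs => rw [← Nat.div_add_mod (a - 1 + m) (n-1)]
    omega
  rcases Nat.eq_zero_or_pos q with h0 | h0
  · subst h0; simp at hq; omega
  · have : n - 1 ≤ (n-1) * q := Nat.le_mul_of_pos_right _ h0
    omega

lemma decRun_pos (n : ℕ) (l : List ℕ) (h : l ≠ []) : 1 ≤ decRun n l := by
  match l with
  | [a] => simp [decRun]
  | a :: b :: t => rw [decRun]; split <;> omega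

lemma decRun_le (n : ℕ) : ∀ (l : List ℕ), decRun n l ≤ l.length := by
  intro l
  match l with
  | [] => simp [decRun]
  | [a] => simp [decRun]
  | a :: b :: t =>
    have := decRun_le n (b :: t)
    rw [decRun]; split <;> simp_all <;> omega

lemma decRun_cons_decomp {n a k : ℕ} {l : List ℕ} (h : decRun n (a :: l) = k) (hk : 2 ≤ k) :
    ∃ b t, l = b :: t ∧ a = osucc n b ∧ decRun n l = k - 1 := by
  match l with
  | [] => simp [decRun] at h; omega
  | b :: t =>
    rw [decRun] at h
    split at h
    · exact ⟨b, t, rfl, by assumption, by omega⟩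
    · omega

lemma decRun_chain (n : ℕ) : ∀ (m : ℕ) (l : List ℕ), m < decRun n l →
    l.getD 0 0 = (osucc n)^[m] (l.getD m 0) := by
  intro m
  induction m with
  | zero => intro l _; simp
  | succ m ih =>
    intro l hm
    have h2 : 2 ≤ decRun n l := by omega
    match l with
    | [] => simp [decRun] at hm
    | a :: t =>
      obtain ⟨b, t', rfl, hab, hdt⟩ := decRun_cons_decomp rfl h2
      have := ih (b :: t') (by omega)
      simp only [List.getD_cons_zero, List.getD_cons_succ] at *
      rw [Function.iterate_succ_apply']
      rw [← this, hab]

lemma decRun_insert (n x : ℕ) : ∀ (l : List ℕ) (j d : ℕ), decRun n l = d → 1 ≤ j →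
    j ≤ l.length → (j ≤ d → l.getD (j-1) 0 ≠ osucc n x) →
    decRun n (l.insertIdx j x) = min d j := by
  intro l
  induction l with
  | nil => intro j d _ h1 h2 _; simp at h2; omega
  | cons a t ih =>
    intro j d hd h1 h2 hbr
    have hd1 : 1 ≤ d := hd ▸ decRun_pos n (a :: t) (by simp)
    rcases Nat.lt_or_ge j 2 with hj | hj
    · have hj1 : j = 1 := by omega
      subst hj1
      have hne : a ≠ osucc n x := by simpa using hbr (by omega)
      have : (a :: t).insertIdx 1 x = a :: x :: t := rfl
      rw [this, decRun, if_neg hne]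
      omega
    · have ht : t ≠ [] := by rintro rfl; simp at h2; omega
      obtain ⟨b, t', rfl⟩ := List.exists_cons_of_ne_nil ht
      obtain ⟨j', rfl⟩ : ∃ j', j = j' + 2 := ⟨j - 2, by omega⟩
      have hins : (a :: b :: t').insertIdx (j' + 2) x = a :: ((b :: t').insertIdx (j' + 1) x) := rfl
      have hins2 : (b :: t').insertIdx (j' + 1) x = b :: t'.insertIdx j' x := rfl
      by_cases hab : a = osucc n b
      · have hdt : decRun n (b :: t') = d - 1 := by
          rw [decRun, if_pos hab] at hd; omega
        have hihres := ih (j' + 1) (d - 1) hdt (by omega) (by simp at h2 ⊢; omega)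
          (fun hle => by
            have := hbr (by omega)
            simpa using this)
        rw [hins, hins2, decRun, if_pos hab, ← hins2, hihres]
        omega
      · have hd1' : d = 1 := by rw [decRun, if_neg hab] at hd; omega
        rw [hins, hins2, decRun, if_neg hab]
        omega

lemma rotate_inv (l : List ℕ) (a : ℕ) (h : 0 < l.length) :
    (l.rotate a).rotate (l.length - a % l.length) = l := by
  rw [List.rotate_rotate]
  have hmod : (a + (l.length - a % l.length)) % l.length = 0 := by
    have h1 : a % l.length < l.length := Nat.mod_lt _ h
    obtain ⟨q, hq⟩ : ∃ q, a = l.length * q + a % l.length :=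
      ⟨a / l.length, by conv_lhs => rw [← Nat.div_add_mod a l.length]⟩
    have : a + (l.length - a % l.length) = l.length * (q + 1) := by
      rw [Nat.mul_add, Nat.mul_one]; omega
    rw [this, Nat.mul_mod_right]
  rw [← List.rotate_mod, hmod, List.rotate_zero]

lemma eq_of_rotate_eq {L1 L2 : List ℕ} (hlen : L1.length = L2.length) (hpos : 0 < L1.length)
    (hnd : L1.Nodup) (hh : L1.head? = L2.head?) {a b : ℕ}
    (h : L1.rotate a = L2.rotate b) : L1 = L2 := by
  obtain ⟨t, htlt, hL2⟩ : ∃ t, t < L1.length ∧ L2 = L1.rotate t := by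
    have hinv := rotate_inv L2 b (hlen ▸ hpos)
    rw [← h, List.rotate_rotate] at hinv
    refine ⟨(a + (L2.length - b % L2.length)) % L1.length, Nat.mod_lt _ hpos, ?_⟩
    rw [List.rotate_mod, hinv]
  have hhead : L1[t]? = L1[0]? := by
    have h1 : (L1.rotate t)[0]? = L1[(0 + t) % L1.length]? := List.getElem?_rotate hpos
    rw [Nat.zero_add, Nat.mod_eq_of_lt htlt] at h1
    rw [← h1, ← List.head?_eq_getElem?, ← List.head?_eq_getElem?, hh, hL2]
  have ht0 := (List.getElem?_inj htlt hnd).mp hhead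
  rw [ht0, List.rotate_zero] at hL2
  exact hL2.symm

lemma insertIdx_get_self (x : ℕ) (l : List ℕ) (m : ℕ) (hm : m ≤ l.length) :
    (l.insertIdx m x)[m]? = some x := by
  rw [insertIdx_eq_take_drop x m l hm]
  rw [List.getElem?_append_right (by simp [hm])]
  simp [Nat.min_eq_left hm]

lemma insertIdx_inj (x : ℕ) (l : List ℕ) (hx : x ∉ l) {m1 m2 : ℕ}
    (h1 : m1 ≤ l.length) (h2 : m2 ≤ l.length)
    (h : l.insertIdx m1 x = l.insertIdx m2 x) : m1 = m2 := by
  by_contra hne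
  wlog hlt : m1 < m2 generalizing m1 m2
  · exact this h2 h1 h.symm (Ne.symm hne) (by omega)
  have e1 : (l.insertIdx m1 x)[m1]? = some x := insertIdx_get_self x l m1 h1
  have e2 : (l.insertIdx m2 x)[m1]? = l[m1]? := by
    rw [insertIdx_eq_take_drop x m2 l h2]
    rw [List.getElem?_append_left (by simp; omega)]
    simp [List.getElem?_take, hlt]
  rw [h, e2] at e1
  have hml : m1 < l.length := by omega
  rw [List.getElem?_eq_getElem hml] at e1
  have : l[m1] = x := by simpa using e1
  exact hx (this ▸ List.getElem_mem hml)

lemma shift_eq (n i : ℕ) (hn : 6 ≤ n) (φ : List ℕ) (hlen : φ.length = n - 1)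
    (h1 : 1 ≤ i) (h2 : i ≤ n - 3) :
    sig^[i] (seedShift n φ i) = φ.insertIdx (n - i) (mis n φ) := by
  set x := mis n φ with hx
  rw [seedShift, sig_iter]
  rcases Nat.eq_or_lt_of_le h1 with h1' | h1'
  · rw [← h1']
    rw [show n - 1 = φ.length from hlen.symm, List.rotate_length]
    have hr : (x :: φ).rotate 1 = φ ++ [x] := by
      rw [List.rotate_cons_succ, List.rotate_zero]
    rw [hr, insertIdx_eq_take_drop x (φ.length) φ (le_refl _)]
    simp
  · have hni : n - i ≤ φ.length := by omega
    rw [List.rotate_eq_drop_append_take hni]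
    have e1 : x :: (φ.drop (n-i) ++ φ.take (n-i)) = (x :: φ.drop (n-i)) ++ φ.take (n-i) := rfl
    have hfront : (x :: φ.drop (n - i)).length = i := by
      simp [List.length_drop]; omega
    rw [e1, List.rotate_eq_drop_append_take (by simp [List.length_drop]; omega)]
    rw [List.drop_left' hfront, List.take_left' hfront, insertIdx_eq_take_drop x (n-i) φ hni]

lemma insert_rot_norm {n : ℕ} (hn : 6 ≤ n) (ψ : List ℕ) (hlen : ψ.length = n - 1)
    {p : ℕ} (j : ℕ) (hp : p ≤ n - 1) (z : ℕ) :
    ∃ p' j', 1 ≤ p' ∧ p' ≤ n - 1 ∧ (ψ.insertIdx p z).rotate j = (ψ.insertIdx p' z).rotate j' := by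
  rcases Nat.eq_zero_or_pos p with rfl | hp0
  · refine ⟨n - 1, (n - 1) + j, by omega, le_refl _, ?_⟩
    have h1 : ψ.insertIdx 0 z = z :: ψ := rfl
    have h2 : ψ.insertIdx (n-1) z = ψ ++ [z] := by
      rw [insertIdx_eq_take_drop z (n-1) ψ (by omega), ← hlen]
      simp
    rw [h1, h2, ← List.rotate_rotate]
    congr 1
    rw [List.rotate_eq_drop_append_take (by simp [hlen]), ← hlen,
      List.drop_left, List.take_left]
    rfl
  · exact ⟨p, j, hp0, hp, rfl⟩

/-- a non-hub seed φ of height k with 1 < k ≤ n−4 has an i-th son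
for every 1 ≤ i ≤ n−3, every child of φ is son(φ, i) for exactly one such i,
and height(son(φ, i)) = Δ(k, i) = min(k−1, n−2−i). -/
theorem sons_of_nonhub_seed (n : ℕ) (hn : 6 ≤ n) (φ : List ℕ) (hφ : IsSeed n φ)
    (hhub : φ ∉ Hub n) (k : ℕ) (hk : height n φ = k) (hk1 : 1 < k) (hk2 : k ≤ n - 4) :
    (∀ i, 1 ≤ i → i ≤ n - 3 → ∃ β, IsSon n β φ i) ∧
    (∀ β, IsParent n φ β → ∃! i, (1 ≤ i ∧ i ≤ n - 3) ∧ IsSon n β φ i) ∧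
    (∀ i β, 1 ≤ i → i ≤ n - 3 → IsSon n β φ i →
      height n β = min (k - 1) (n - 2 - i)) := by
  have hn3 : 3 ≤ n := by omega
  obtain ⟨hlen, hhead, hperm⟩ := hφ
  rcases φ with _ | ⟨a1, A⟩
  · simp at hhead
  have ha1 : a1 = n := by simpa using hhead
  subst a1
  rcases A with _ | ⟨a2, A1⟩
  · simp at hlen; omega
  rcases A1 with _ | ⟨a3, rest'⟩
  · simp at hlen; omega
  simp only [List.length_cons] at hlen
  have hlr : rest'.length = n - 4 := by omega
  set x := osucc n a2 with hxdef
  have hxmis : mis n (n :: a2 :: a3 :: rest') = x := rfl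
  have hsp : seedToPerm n (n :: a2 :: a3 :: rest') = n :: x :: a2 :: a3 :: rest' := rfl
  rw [IsPerm, hsp] at hperm
  have hnd : (n :: x :: a2 :: a3 :: rest').Nodup :=
    (hperm.nodup_iff).mpr (List.nodup_range' (s := 1) (n := n))
  have hbound : ∀ e ∈ n :: x :: a2 :: a3 :: rest', 1 ≤ e ∧ e ≤ n := by
    intro e he
    have := hperm.subset he
    rw [List.mem_range'_1] at this
    omega
  have hnmem : n ∉ x :: a2 :: a3 :: rest' := (List.nodup_cons.mp hnd).1
  have hndt : (x :: a2 :: a3 :: rest').Nodup := (List.nodup_cons.mp hnd).2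
  have hxmem : x ∉ a2 :: a3 :: rest' := (List.nodup_cons.mp hndt).1
  have ha2pos : 1 ≤ a2 := (hbound a2 (by simp)).1
  have ha2n : a2 ≤ n - 1 := by
    have h1 := (hbound a2 (by simp)).2
    have h2 : a2 ≠ n := by intro h; exact hnmem (by simp [h])
    omega
  have hna2 : n ≠ a2 := by intro h; exact hnmem (by simp [← h])
  have hxa2 : x ≠ a2 := by intro h; exact hxmem (by simp [h])
  have hxφ : x ∉ n :: a2 :: a3 :: rest' := by
    simp only [List.mem_cons] at hxmem ⊢
    have : x ≠ n := by intro h; exact hnmem (by simp [h])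
    tauto
  have hk' : decRun n (a2 :: a3 :: rest') = k := hk
  obtain ⟨b, t, hbt, ha23, hd3⟩ := decRun_cons_decomp hk' (by omega)
  injection hbt with hb ht
  subst hb; subst ht
  -- ha23 : a2 = osucc n a3 ; hd3 : decRun n (a3 :: rest') = k - 1
  have hshift : ∀ i, 1 ≤ i → i ≤ n - 3 →
      sig^[i] (seedShift n (n :: a2 :: a3 :: rest') i)
        = (n :: a2 :: a3 :: rest').insertIdx (n - i) x := by
    intro i h1 h2
    rw [← hxmis]
    exact shift_eq n i hn _ (by simp; omega) h1 h2
  have hcontrx : osucc n x ≠ a2 := by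
    intro h
    have h2it : (osucc n)^[2] a2 = a2 := by
      show osucc n (osucc n a2) = a2
      rw [← hxdef]; exact h
    exact osucc_iter_ne hn3 ha2pos ha2n (by omega) (by omega) h2it
  have hson_construct : ∀ i, 1 ≤ i → i ≤ n - 3 →
      IsSon n (n :: (a3 :: rest').insertIdx (n - 2 - i) x) (n :: a2 :: a3 :: rest') i := by
    intro i h1 h2
    obtain ⟨j', hj'⟩ : ∃ j', n - 2 - i = j' + 1 := ⟨n - 3 - i, by omega⟩
    have hj'le : j' ≤ rest'.length := by omega
    have hM : (a3 :: rest').insertIdx (n - 2 - i) x = a3 :: rest'.insertIdx j' x := by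
      rw [hj']; exact List.insertIdx_succ_cons
    have pM : (rest'.insertIdx j' x).Perm (x :: rest') := List.perm_insertIdx x rest' hj'le
    have hbig : (n :: a2 :: a3 :: rest'.insertIdx j' x).Perm (List.range' 1 n) := by
      refine List.Perm.trans ?_ hperm
      refine List.Perm.trans (((pM.cons a3).cons a2).cons n) ?_
      refine List.Perm.cons n ?_
      refine List.Perm.trans (List.Perm.cons a2 (List.Perm.swap x a3 rest')) ?_
      exact List.Perm.swap x a2 (a3 :: rest')
    constructor
    · refine ⟨?_, rfl, ?_⟩
      · simp only [hM, List.length_cons, List.length_insertIdx_of_le_length hj'le]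
        omega
      · show IsPerm n (seedToPerm n (n :: (a3 :: rest').insertIdx (n - 2 - i) x))
        rw [hM]
        have hsp2 : seedToPerm n (n :: a3 :: rest'.insertIdx j' x)
            = n :: osucc n a3 :: a3 :: rest'.insertIdx j' x := rfl
        rw [IsPerm, hsp2, ← ha23]
        exact hbig
    · rw [hshift i h1 h2]
      have hni : n - i = (n - 2 - i) + 2 := by omega
      have htld : tildeSeed n (n :: a3 :: rest'.insertIdx j' x)
          = n :: osucc n a3 :: a3 :: rest'.insertIdx j' x := rfl
      have lhs_eq : (n :: a2 :: a3 :: rest').insertIdx ((n - 2 - i) + 2) x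
          = n :: a2 :: ((a3 :: rest').insertIdx (n - 2 - i) x) := rfl
      rw [hni, lhs_eq, hM, htld, ← ha23]
  have hson_unique : ∀ i1 i2 β, 1 ≤ i1 → i1 ≤ n - 3 → 1 ≤ i2 → i2 ≤ n - 3 →
      IsSon n β (n :: a2 :: a3 :: rest') i1 → IsSon n β (n :: a2 :: a3 :: rest') i2 →
      i1 = i2 := by
    intro i1 i2 β h11 h12 h21 h22 hs1 hs2
    have he1 := hs1.2
    have he2 := hs2.2
    rw [hshift i1 h11 h12] at he1
    rw [hshift i2 h21 h22] at he2
    have heq := he1.trans he2.symm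
    have := insertIdx_inj x (n :: a2 :: a3 :: rest') hxφ
      (by simp; omega) (by simp; omega) heq
    omega
  refine ⟨?_, ?_, ?_⟩
  · intro i h1 h2
    exact ⟨_, hson_construct i h1 h2⟩
  · intro β hpar
    obtain ⟨-, hβseed, hneq, ⟨π, hπφ, hπβ⟩, -, hmis⟩ := hpar
    obtain ⟨hblen, hbhead, hbperm⟩ := hβseed
    rcases β with _ | ⟨b1, B⟩
    · simp at hbhead
    have hb1 : b1 = n := by simpa using hbhead
    subst b1
    rcases B with _ | ⟨b2, brest⟩
    · simp at hblen; omega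
    simp only [List.length_cons] at hblen
    have hmisb : mis n (n :: b2 :: brest) = osucc n b2 := rfl
    rw [hxmis, hmisb] at hmis
    have hmisβa2 : a2 = osucc n b2 :=
      osucc_inj ha2pos (osucc_pos n b2) (hxdef ▸ hmis)
    have hspb : seedToPerm n (n :: b2 :: brest) = n :: osucc n b2 :: b2 :: brest := rfl
    rw [IsPerm, hspb, ← hmisβa2] at hbperm
    have hbnd : (n :: a2 :: b2 :: brest).Nodup :=
      (hbperm.nodup_iff).mpr (List.nodup_range' (s := 1) (n := n))
    have ha2β : a2 ∉ n :: b2 :: brest := by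
      have h1 : n ∉ a2 :: b2 :: brest := (List.nodup_cons.mp hbnd).1
      have h2 : a2 ∉ b2 :: brest := (List.nodup_cons.mp (List.nodup_cons.mp hbnd).2).1
      simp only [List.mem_cons] at h1 h2 ⊢
      tauto
    obtain ⟨p, jp, hple, hπ1⟩ := hπφ
    obtain ⟨q, jq, hqle, hπ2⟩ := hπβ
    rw [hxmis] at hπ1
    rw [hmisb, ← hmisβa2] at hπ2
    have hple' : p ≤ n - 1 := by simp at hple; omega
    have hqle' : q ≤ n - 1 := by simp at hqle; omega
    obtain ⟨p', jp', hp1, hp2, hP⟩ :=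
      insert_rot_norm hn (n :: a2 :: a3 :: rest') (by simp; omega) jp hple' x
    obtain ⟨q', jq', hq1, hq2, hQ⟩ :=
      insert_rot_norm hn (n :: b2 :: brest) (by simp; omega) jq hqle' a2
    have key : ((n :: a2 :: a3 :: rest').insertIdx p' x).rotate jp'
        = ((n :: b2 :: brest).insertIdx q' a2).rotate jq' := by
      rw [← hP, ← hπ1, hπ2, hQ]
    have hp2le : p' ≤ (n :: a2 :: a3 :: rest').length := by simp; omega
    have hq2le : q' ≤ (n :: b2 :: brest).length := by simp; omega
    have hL1len : ((n :: a2 :: a3 :: rest').insertIdx p' x).length = n := by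
      rw [List.length_insertIdx_of_le_length hp2le]; simp; omega
    have hL2len : ((n :: b2 :: brest).insertIdx q' a2).length = n := by
      rw [List.length_insertIdx_of_le_length hq2le]; simp; omega
    have hnd2 : (x :: n :: a2 :: a3 :: rest').Nodup :=
      (List.Perm.swap x n (a2 :: a3 :: rest')).nodup_iff.mp hnd
    have hL1nd : ((n :: a2 :: a3 :: rest').insertIdx p' x).Nodup :=
      ((List.perm_insertIdx x _ hp2le).nodup_iff).mpr hnd2
    obtain ⟨p0, rfl⟩ : ∃ p0, p' = p0 + 1 := ⟨p' - 1, by omega⟩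
    obtain ⟨q0, rfl⟩ : ∃ q0, q' = q0 + 1 := ⟨q' - 1, by omega⟩
    have hL1L2 : (n :: a2 :: a3 :: rest').insertIdx (p0 + 1) x
        = (n :: b2 :: brest).insertIdx (q0 + 1) a2 := by
      refine eq_of_rotate_eq (by rw [hL1len, hL2len]) (by rw [hL1len]; omega) hL1nd ?_ key
      rfl
    have hL2erase : ((n :: b2 :: brest).insertIdx (q0 + 1) a2).erase a2 = n :: b2 :: brest := by
      rw [insertIdx_eq_take_drop a2 (q0 + 1) _ hq2le,
        List.erase_append_right _ (fun hmem => ha2β (List.mem_of_mem_take hmem)),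
        List.erase_cons_head, List.take_append_drop]
    rw [← hL1L2] at hL2erase
    -- hL2erase : L1.erase a2 = n :: b2 :: brest
    have hb2x : b2 = x → False := by
      intro hb2
      rw [hb2] at hmisβa2
      exact hcontrx hmisβa2.symm
    rcases p0 with _ | s
    · -- p' = 1
      exfalso
      have : ((n :: a2 :: a3 :: rest').insertIdx 1 x).erase a2 = n :: x :: a3 :: rest' := by
        show (n :: x :: a2 :: a3 :: rest').erase a2 = n :: x :: a3 :: rest'
        rw [List.erase_cons_tail (by simp [hna2]), List.erase_cons_tail (by simp [hxa2]),
          List.erase_cons_head]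
      rw [this] at hL2erase
      injection hL2erase with _ h2
      injection h2 with hb2 _
      exact hb2x hb2.symm
    · -- p' = s + 2
      have hL1form : (n :: a2 :: a3 :: rest').insertIdx (s + 2) x
          = n :: a2 :: ((a3 :: rest').insertIdx s x) := rfl
      have herase2 : ((n :: a2 :: a3 :: rest').insertIdx (s + 2) x).erase a2
          = n :: (a3 :: rest').insertIdx s x := by
        rw [hL1form, List.erase_cons_tail (by simp [hna2]), List.erase_cons_head]
      rw [herase2] at hL2erase
      rcases s with _ | s1
      · exfalso
        have : (a3 :: rest').insertIdx 0 x = x :: a3 :: rest' := rfl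
        rw [this] at hL2erase
        injection hL2erase with _ h2
        injection h2 with hb2 _
        exact hb2x hb2.symm
      · -- p' = s1 + 3, son index i0 = n - (s1 + 3)
        have hs1n : s1 + 1 + 1 + 1 ≤ n - 1 := hp2
        set i0 := n - (s1 + 3) with hi0
        have hi0b : 1 ≤ i0 ∧ i0 ≤ n - 3 := by omega
        have hidx : n - 2 - i0 = s1 + 1 := by omega
        have hcon := hson_construct i0 hi0b.1 hi0b.2
        rw [hidx] at hcon
        have hβeq : n :: b2 :: brest = n :: (a3 :: rest').insertIdx (s1 + 1) x := by
          rw [← hL2erase]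
        rw [← hβeq] at hcon
        refine ⟨i0, ⟨hi0b, hcon⟩, ?_⟩
        intro i' ⟨⟨hi'1, hi'2⟩, hson'⟩
        exact hson_unique i' i0 _ hi'1 hi'2 hi0b.1 hi0b.2 hson' hcon
  · intro i β h1 h2 hson
    obtain ⟨hβseed, heq⟩ := hson
    rw [hshift i h1 h2] at heq
    obtain ⟨hblen, hbhead, hbperm⟩ := hβseed
    rcases β with _ | ⟨b1, B⟩
    · simp at hbhead
    have hb1 : b1 = n := by simpa using hbhead
    subst b1
    have hni : n - i = (n - 2 - i) + 2 := by omega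
    have hL : (n :: a2 :: a3 :: rest').insertIdx ((n - 2 - i) + 2) x
        = n :: a2 :: (a3 :: rest').insertIdx (n - 2 - i) x := rfl
    have htil : tildeSeed n (n :: B) = n :: mis n (n :: B) :: B := rfl
    rw [hni, hL, htil] at heq
    injection heq with _ heq2
    injection heq2 with hmise hBeq
    have hh : height n (n :: B) = decRun n B := rfl
    rw [hh, ← hBeq]
    refine decRun_insert n x (a3 :: rest') (n - 2 - i) (k - 1) hd3 (by omega)
      (by simp; omega) ?_
    intro hle hcontr
    obtain ⟨j1, hj1⟩ : ∃ j1, n - 2 - i = j1 + 1 := ⟨n - 3 - i, by omega⟩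
    rw [hj1] at hcontr hle
    simp only [Nat.add_sub_cancel] at hcontr
    have hchain := decRun_chain n j1 (a3 :: rest') (by omega)
    simp only [List.getD_cons_zero] at hchain
    have hstep : (osucc n)^[2] a2 = osucc n x := by
      show osucc n (osucc n a2) = osucc n x
      rw [← hxdef]
    have hiter : (osucc n)^[j1 + 3] a2 = a2 := by
      have e : j1 + 3 = 1 + (j1 + 2) := by omega
      rw [e, Function.iterate_add_apply, Function.iterate_add_apply, hstep]
      rw [← hcontr, ← hchain]
      simpa using ha23.symm
    exact osucc_iter_ne hn3 ha2pos ha2n (by omega) (by omega) hiter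
end

section
/- For every integer n ≥ 4, every seed ψ and every i with 0 < i < n−1, applying the word γ_{n−1} = σ^{n−1} τ to the permutation ψ^(i) yields ψ^(i+1). -/
lemma foldl_replicate_false (k : ℕ) (l : List ℕ) :
    (List.replicate k false).foldl (fun p c => if c then tau p else sig p) l
      = l.rotate k := by
  induction k generalizing l with
  | zero => simp
  | succ m ih =>
    rw [List.replicate_succ, List.foldl_cons, if_neg (by simp), ih (sig l)]
    show (l.rotate 1).rotate m = l.rotate (m + 1)
    rw [List.rotate_rotate, Nat.add_comm]

lemma applyWord_gam (k : ℕ) (l : List ℕ) :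
    applyWord (gam k) l = tau (l.rotate k) := by
  unfold applyWord gam
  rw [List.foldl_append, foldl_replicate_false]
  simp

/-- applying γ_{n−1} = σ^{n−1}τ to ψ^(i) yields ψ^(i+1),
for every seed ψ and 0 < i < n−1. -/
theorem gamma_shifts_seed (n : ℕ) (hn : 4 ≤ n) (ψ : List ℕ) (hψ : IsSeed n ψ)
    (i : ℕ) (h1 : 0 < i) (h2 : i < n - 1) :
    applyWord (gam (n - 1)) (seedShift n ψ i) = seedShift n ψ (i + 1) := by
  obtain ⟨hlen, -, -⟩ := hψ
  unfold seedShift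
  rw [applyWord_gam]
  set x := mis n ψ with hx
  set L := ψ.rotate (n - i) with hLdef
  have hLlen : L.length = n - 1 := by simp [hLdef, hlen]
  have hrot : (x :: L).rotate (n - 1) = L.drop (n - 2) ++ (x :: L.take (n - 2)) := by
    rw [List.rotate_eq_drop_append_take (by simp [hLlen])]
    have h12 : n - 1 = (n - 2) + 1 := by omega
    rw [h12, List.drop_succ_cons, List.take_succ_cons]
  obtain ⟨a, ha⟩ : ∃ a, L.drop (n - 2) = [a] :=
    List.length_eq_one_iff.mp (by rw [List.length_drop, hLlen]; omega)
  rw [hrot, ha]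
  show x :: a :: L.take (n - 2) = x :: ψ.rotate (n - (i + 1))
  congr 1
  have : a :: L.take (n - 2) = L.rotate (n - 2) := by
    rw [List.rotate_eq_drop_append_take (by omega), ha]
    rfl
  rw [this, hLdef, List.rotate_rotate]
  have hmod : (n - i + (n - 2)) = (n - (i + 1)) + (n - 1) := by omega
  rw [hmod, ← List.rotate_mod, hlen, Nat.add_mod_right,
    Nat.mod_eq_of_lt (by omega)]
end
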